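/- arXiv:1704.02597 — 6 statements merged into one kernel-verified Lean document; each statement's English description precedes it below -/
import Mathlib

section
/- Let $u \in C(\mathbb{R}) \cap L^\infty(\mathbb{R})$ with $u=0$ on $(-\infty,0]$, and suppose $u \in C^1(0,+\infty)$ with $u' \in L^1(b_0, +\infty)$ for some $b_0 > 0$. Then for every fixed $\delta > 0$ and $a > 0$, $\lim_{M \to +\infty} \int_{-M}^{M-\delta} \frac{(u(M)-u(y))^2}{|M-y|^{1+2s}}\,dy = 0$. -/
open MeasureTheory Real Filter


lemma pow_int_bound (s M c d : ℝ) (hs : 0 < s) (hcd : c ≤ d) (hdM : d < M) :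
    ∫ y in Set.Ioo c d, (M - y) ^ (-(1 + 2 * s)) ≤ (M - d) ^ (-(2 * s)) / (2 * s) := by
  have h2s : 0 < 2 * s := by linarith
  have hMd : 0 < M - d := by linarith
  have hMc : 0 < M - c := by linarith
  have h1 : ∫ y in Set.Ioo c d, (M - y) ^ (-(1 + 2 * s))
      = ∫ y in c..d, (M - y) ^ (-(1 + 2 * s)) := by
    rw [intervalIntegral.integral_of_le hcd, setIntegral_congr_set Ioo_ae_eq_Ioc]
  rw [h1, intervalIntegral.integral_comp_sub_left (fun t => t ^ (-(1 + 2 * s))) M,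
    integral_rpow (Or.inr ⟨by intro h; rw [neg_eq_iff_eq_neg] at h; linarith,
      by rw [Set.uIcc_of_le (by linarith : M - d ≤ M - c)]
         intro h; exact absurd h.1 (by linarith)⟩)]
  have he : -(1 + 2 * s) + 1 = -(2 * s) := by ring
  rw [he]
  have heq : ((M - c) ^ (-(2*s)) - (M - d) ^ (-(2*s))) / -(2 * s)
      = ((M - d) ^ (-(2*s)) - (M - c) ^ (-(2*s))) / (2 * s) := by
    field_simp; ring
  rw [heq, div_le_div_iff₀ h2s h2s]
  nlinarith [rpow_nonneg hMc.le (-(2*s))]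


lemma tail_tendsto (f : ℝ → ℝ) (b0 : ℝ) (hf : IntegrableOn f (Set.Ioi b0)) :
    Tendsto (fun t => ∫ x in Set.Ioi t, f x) atTop (nhds 0) := by
  have h1 := intervalIntegral_tendsto_integral_Ioi b0 hf tendsto_id
  have h2 : Tendsto (fun t => (∫ x in Set.Ioi b0, f x) - ∫ x in b0..t, f x)
      atTop (nhds 0) := by
    have := tendsto_const_nhds (f := atTop) (x := ∫ x in Set.Ioi b0, f x) |>.sub h1
    simpa using this
  refine h2.congr' ?_
  filter_upwards [eventually_ge_atTop b0] with t ht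
  rw [intervalIntegral.integral_of_le ht]
  have hu : Set.Ioc b0 t ∪ Set.Ioi t = Set.Ioi b0 := Set.Ioc_union_Ioi_eq_Ioi ht
  have hdisj : Disjoint (Set.Ioc b0 t) (Set.Ioi t) := by
    rw [Set.disjoint_left]; rintro x ⟨_, hx2⟩ hx3; exact absurd hx3 (not_lt.2 hx2)
  have := setIntegral_union hdisj measurableSet_Ioi
    (hf.mono_set Set.Ioc_subset_Ioi_self) (hf.mono_set (Set.Ioi_subset_Ioi ht))
  rw [hu] at this
  linarith

lemma ftc_bound (u : ℝ → ℝ) (hu_C1 : ContDiffOn ℝ 1 u (Set.Ioi 0)) (b0 : ℝ) (hb0 : 0 < b0)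
    (hint : IntegrableOn (deriv u) (Set.Ioi b0)) (w y M : ℝ)
    (hbw : b0 ≤ w) (hwy : w < y) (hyM : y ≤ M) :
    |u M - u y| ≤ ∫ t in Set.Ioi w, |deriv u t| := by
  have hIccsub : Set.Icc y M ⊆ Set.Ioi b0 := fun x hx => by
    simp only [Set.mem_Ioi]; linarith [hx.1]
  have hdiff : ∀ x ∈ Set.uIcc y M, DifferentiableAt ℝ u x := by
    intro x hx
    rw [Set.uIcc_of_le hyM] at hx
    exact (hu_C1.differentiableOn one_ne_zero).differentiableAt
      (isOpen_Ioi.mem_nhds (show (0:ℝ) < x by linarith [hx.1]))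
  have hInt : IntervalIntegrable (deriv u) volume y M := by
    apply IntegrableOn.intervalIntegrable
    rw [Set.uIcc_of_le hyM]
    exact hint.mono_set hIccsub
  have heq := intervalIntegral.integral_deriv_eq_sub hdiff hInt
  rw [← heq]
  calc |∫ t in y..M, deriv u t| ≤ ∫ t in y..M, |deriv u t| :=
        intervalIntegral.abs_integral_le_integral_abs hyM
    _ = ∫ t in Set.Ioc y M, |deriv u t| := intervalIntegral.integral_of_le hyM
    _ ≤ ∫ t in Set.Ioi w, |deriv u t| := by
        apply setIntegral_mono_set ((hint.mono_set (Set.Ioi_subset_Ioi hbw)).abs)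
        · exact Eventually.of_forall fun x => abs_nonneg _
        · exact HasSubset.Subset.eventuallyLE fun x hx => by
            simp only [Set.mem_Ioi]; exact lt_of_le_of_lt hwy.le (by exact_mod_cast hx.1) |>.trans_le le_rfl

lemma integrable_aux (u : ℝ → ℝ) (hu : Continuous u) (s M c d : ℝ) (hs : 0 < s) (hdM : d < M) :
    IntegrableOn (fun y => (u M - u y) ^ 2 / |M - y| ^ (1 + 2 * s)) (Set.Icc c d) := by
  apply ContinuousOn.integrableOn_Icc
  apply ContinuousOn.div
  · exact ((continuous_const.sub hu).pow 2).continuousOn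
  · exact ContinuousOn.rpow_const ((continuous_const.sub continuous_id).abs).continuousOn
      (fun x _ => Or.inr (by linarith))
  · intro x hx
    have h : 0 < M - x := by linarith [hx.2]
    rw [abs_of_pos h]
    exact ne_of_gt (rpow_pos_of_pos h _)

lemma integrable_aux2 (s M c d : ℝ) (hdM : d < M) :
    IntegrableOn (fun y => (M - y) ^ (-(1 + 2 * s))) (Set.Icc c d) := by
  apply ContinuousOn.integrableOn_Icc
  exact ContinuousOn.rpow_const (continuous_const.sub continuous_id).continuousOn
    (fun x hx => Or.inl (by have h : 0 < M - x := by linarith [hx.2]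
                            exact ne_of_gt h))

theorem stmt3 (s : ℝ) (hs : s ∈ Set.Ioo (0:ℝ) 1) (u : ℝ → ℝ)
    (hu_cont : Continuous u) (hu_bdd : ∃ C, ∀ x, |u x| ≤ C)
    (hu_zero : ∀ x ≤ (0:ℝ), u x = 0)
    (hu_C1 : ContDiffOn ℝ 1 u (Set.Ioi 0))
    (b0 : ℝ) (hb0 : 0 < b0) (hint : IntegrableOn (deriv u) (Set.Ioi b0))
    (δ a : ℝ) (hδ : 0 < δ) (ha : 0 < a) :
    Tendsto (fun M : ℝ => ∫ y in Set.Ioo (-M) (M - δ),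
        (u M - u y) ^ 2 / |M - y| ^ (1 + 2 * s)) atTop (nhds 0) := by
  obtain ⟨C0, hC0⟩ := hu_bdd
  set C := max C0 1 with hCdef
  have hC1 : (1:ℝ) ≤ C := le_max_right _ _
  have hCpos : (0:ℝ) < C := lt_of_lt_of_le one_pos hC1
  have hub : ∀ x, |u x| ≤ C := fun x => (hC0 x).trans (le_max_left _ _)
  have hs0 : 0 < s := hs.1
  have h2s : 0 < 2 * s := by linarith
  rw [NormedAddCommGroup.tendsto_nhds_zero]
  intro ε hε
  -- choose R
  have hRlim : Tendsto (fun R : ℝ => 4 * C ^ 2 * (R ^ (-(2 * s)) / (2 * s)))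
      atTop (nhds 0) := by
    have h := (tendsto_rpow_neg_atTop h2s).const_mul (4 * C ^ 2 / (2 * s))
    simp only [mul_zero] at h
    refine h.congr fun R => by field_simp
  obtain ⟨R, hR1, hR2⟩ : ∃ R : ℝ, max δ 1 ≤ R ∧
      4 * C ^ 2 * (R ^ (-(2 * s)) / (2 * s)) < ε / 2 :=
    ((eventually_ge_atTop (max δ 1)).and
      (hRlim.eventually_lt_const (half_pos hε))).exists
  have hδR : δ ≤ R := le_trans (le_max_left _ _) hR1
  have h1R : (1:ℝ) ≤ R := le_trans (le_max_right _ _) hR1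
  -- tail
  have habs : IntegrableOn (fun t => |deriv u t|) (Set.Ioi b0) := hint.abs
  set g := fun M : ℝ => ∫ t in Set.Ioi (M - R), |deriv u t| with hgdef
  have htail : Tendsto g atTop (nhds 0) := by
    have h1 := tail_tendsto (fun t => |deriv u t|) b0 habs
    have h2 : Tendsto (fun M : ℝ => M - R) atTop atTop :=
      by simpa [sub_eq_add_neg] using tendsto_atTop_add_const_right atTop (-R) (tendsto_id (α := ℝ))
    exact h1.comp h2
  have hgnonneg : ∀ M, 0 ≤ g M := fun M =>
    setIntegral_nonneg measurableSet_Ioi fun t _ => abs_nonneg _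
  have hnear_lim : Tendsto (fun M => 2 * C * g M * (δ ^ (-(2 * s)) / (2 * s)))
      atTop (nhds 0) := by
    have := (htail.const_mul (2 * C)).mul_const (δ ^ (-(2 * s)) / (2 * s))
    simpa using this
  filter_upwards [hnear_lim.eventually_lt_const (half_pos hε),
    eventually_gt_atTop (R + b0), eventually_gt_atTop R] with M hM1 hM2 hM3
  -- basic facts about M
  have hRM : 0 < R := lt_of_lt_of_le one_pos h1R
  have hMpos : 0 < M := lt_trans hRM hM3
  have hb0MR : b0 < M - R := by linarith
  have hMRδ : M - R ≤ M - δ := by linarith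
  have hmMR : -M < M - R := by linarith
  have hMδM : M - δ < M := by linarith
  have hMRM : M - R < M := by linarith
  set f := fun y => (u M - u y) ^ 2 / |M - y| ^ (1 + 2 * s) with hfdef
  have hfnonneg : ∀ y, 0 ≤ f y := fun y =>
    div_nonneg (sq_nonneg _) (rpow_nonneg (abs_nonneg _) _)
  -- pointwise bound helper
  have hpt : ∀ K, 0 ≤ K → ∀ y, y < M → (u M - u y) ^ 2 ≤ K →
      f y ≤ K * (M - y) ^ (-(1 + 2 * s)) := by
    intro K hK y hy hsq
    have hMy : 0 < M - y := by linarith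
    simp only [hfdef]
    rw [abs_of_pos hMy, div_eq_mul_inv, ← Real.rpow_neg hMy.le]
    exact mul_le_mul_of_nonneg_right hsq (rpow_nonneg hMy.le _)
  -- integrability
  have hfi1 : IntegrableOn f (Set.Ioo (-M) (M - R)) :=
    (integrable_aux u hu_cont s M (-M) (M - R) hs0 hMRM).mono_set Set.Ioo_subset_Icc_self
  have hfi2 : IntegrableOn f (Set.Ico (M - R) (M - δ)) :=
    (integrable_aux u hu_cont s M (M - R) (M - δ) hs0 hMδM).mono_set Set.Ico_subset_Icc_self
  have hgi1 : IntegrableOn (fun y => 4 * C ^ 2 * (M - y) ^ (-(1 + 2 * s)))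
      (Set.Ioo (-M) (M - R)) :=
    ((integrable_aux2 s M (-M) (M - R) hMRM).mono_set Set.Ioo_subset_Icc_self).const_mul _
  have hgi2 : IntegrableOn (fun y => 2 * C * g M * (M - y) ^ (-(1 + 2 * s)))
      (Set.Ioo (M - R) (M - δ)) :=
    ((integrable_aux2 s M (M - R) (M - δ) hMδM).mono_set Set.Ioo_subset_Icc_self).const_mul _
  -- split
  have hsplit : Set.Ioo (-M) (M - δ) = Set.Ioo (-M) (M - R) ∪ Set.Ico (M - R) (M - δ) :=
    (Set.Ioo_union_Ico_eq_Ioo hmMR hMRδ).symm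
  have hdisj : Disjoint (Set.Ioo (-M) (M - R)) (Set.Ico (M - R) (M - δ)) := by
    rw [Set.disjoint_left]; rintro x ⟨_, hx2⟩ ⟨hx3, _⟩; exact absurd hx3 (not_le.2 hx2)
  have hint_nonneg : 0 ≤ ∫ y in Set.Ioo (-M) (M - δ), f y :=
    setIntegral_nonneg measurableSet_Ioo fun y _ => hfnonneg y
  rw [Real.norm_eq_abs, abs_of_nonneg hint_nonneg]
  rw [hsplit, setIntegral_union hdisj measurableSet_Ico hfi1 hfi2]
  -- far part
  have hfar : ∫ y in Set.Ioo (-M) (M - R), f y ≤ 4 * C ^ 2 * (R ^ (-(2 * s)) / (2 * s)) := by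
    calc ∫ y in Set.Ioo (-M) (M - R), f y
        ≤ ∫ y in Set.Ioo (-M) (M - R), 4 * C ^ 2 * (M - y) ^ (-(1 + 2 * s)) := by
          apply setIntegral_mono_on hfi1 hgi1 measurableSet_Ioo
          intro y hy
          apply hpt _ (by positivity) y (by linarith [hy.2])
          have h1 : |u M - u y| ≤ 2 * C := by
            calc |u M - u y| ≤ |u M| + |u y| := abs_sub _ _
              _ ≤ C + C := add_le_add (hub M) (hub y)
              _ = 2 * C := by ring
          calc (u M - u y) ^ 2 = |u M - u y| ^ 2 := (sq_abs _).symm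
            _ ≤ (2 * C) ^ 2 := pow_le_pow_left₀ (abs_nonneg _) h1 2
            _ = 4 * C ^ 2 := by ring
      _ = 4 * C ^ 2 * ∫ y in Set.Ioo (-M) (M - R), (M - y) ^ (-(1 + 2 * s)) :=
          integral_const_mul _ _
      _ ≤ 4 * C ^ 2 * ((M - (M - R)) ^ (-(2 * s)) / (2 * s)) := by
          apply mul_le_mul_of_nonneg_left
            (pow_int_bound s M (-M) (M - R) hs0 hmMR.le hMRM) (by positivity)
      _ = 4 * C ^ 2 * (R ^ (-(2 * s)) / (2 * s)) := by rw [show M - (M - R) = R by ring]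
  -- near part
  have hnear : ∫ y in Set.Ico (M - R) (M - δ), f y
      ≤ 2 * C * g M * (δ ^ (-(2 * s)) / (2 * s)) := by
    rw [integral_Ico_eq_integral_Ioo]
    calc ∫ y in Set.Ioo (M - R) (M - δ), f y
        ≤ ∫ y in Set.Ioo (M - R) (M - δ), 2 * C * g M * (M - y) ^ (-(1 + 2 * s)) := by
          apply setIntegral_mono_on (hfi2.mono_set Set.Ioo_subset_Ico_self) hgi2
            measurableSet_Ioo
          intro y hy
          apply hpt _ (by positivity) y (by linarith [hy.2])
          have hbd : |u M - u y| ≤ g M :=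
            ftc_bound u hu_C1 b0 hb0 hint (M - R) y M hb0MR.le hy.1 (by linarith [hy.2])
          have h1 : |u M - u y| ≤ 2 * C := by
            calc |u M - u y| ≤ |u M| + |u y| := abs_sub _ _
              _ ≤ C + C := add_le_add (hub M) (hub y)
              _ = 2 * C := by ring
          calc (u M - u y) ^ 2 = |u M - u y| * |u M - u y| := by
                rw [← abs_mul, abs_of_nonneg (mul_self_nonneg _), sq]
            _ ≤ (2 * C) * g M := mul_le_mul h1 hbd (abs_nonneg _) (by positivity)
            _ = 2 * C * g M := by ring
      _ = 2 * C * g M * ∫ y in Set.Ioo (M - R) (M - δ), (M - y) ^ (-(1 + 2 * s)) :=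
          integral_const_mul _ _
      _ ≤ 2 * C * g M * ((M - (M - δ)) ^ (-(2 * s)) / (2 * s)) := by
          apply mul_le_mul_of_nonneg_left
            (pow_int_bound s M (M - R) (M - δ) hs0 hMRδ hMδM)
            (by have := hgnonneg M; positivity)
      _ = 2 * C * g M * (δ ^ (-(2 * s)) / (2 * s)) := by rw [show M - (M - δ) = δ by ring]
  linarith
end

section
/- Let $u: \mathbb{R} \to \mathbb{R}$ be bounded, measurable, with $u=0$ on $(-\infty,0]$, and suppose that $u(x)/x^s$ extends to a $C^1$ function on $[0,\infty)$ with value $\ell_0$ at $0$. Then $\lim_{a \to 0^+} \int_a^{+\infty}\int_0^a \frac{(u(x)-u(y))^2}{|x-y|^{2+2s}}\,dy\,dx = \ell_0^2 \int_1^{+\infty}\int_0^1 \frac{(t^s-\tau^s)^2}{(t-\tau)^{2+2s}}\,d\tau\,dt$. -/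
open MeasureTheory Real Filter Set Topology

section stmt4aux

lemma stmt4_cov_Ioo (a : ℝ) (ha : 0 < a) (f : ℝ → ℝ) :
    ∫ y in Set.Ioo (0:ℝ) a, f y = a * ∫ τ in Set.Ioo (0:ℝ) 1, f (a * τ) := by
  have h1 : ∫ τ in (0:ℝ)..1, f (a * τ) = a⁻¹ • ∫ y in (a*0)..(a*1), f y :=
    intervalIntegral.integral_comp_mul_left f ha.ne'
  rw [intervalIntegral.integral_of_le zero_le_one, integral_Ioc_eq_integral_Ioo] at h1
  rw [mul_zero, mul_one, intervalIntegral.integral_of_le ha.le,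
    integral_Ioc_eq_integral_Ioo] at h1
  rw [h1, smul_eq_mul, ← mul_assoc, mul_inv_cancel₀ ha.ne', one_mul]

lemma stmt4_cov_Ioi (a : ℝ) (ha : 0 < a) (f : ℝ → ℝ) :
    ∫ x in Set.Ioi a, f x = a * ∫ t in Set.Ioi (1:ℝ), f (a * t) := by
  have h1 := integral_comp_mul_left_Ioi f 1 ha
  rw [mul_one] at h1
  rw [h1, smul_eq_mul, ← mul_assoc, mul_inv_cancel₀ ha.ne', one_mul]

lemma stmt4_int1 : IntegrableOn (fun t : ℝ => t ^ (-2:ℝ)) (Set.Ioi 1) :=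
  integrableOn_Ioi_rpow_of_lt (by norm_num) one_pos

lemma stmt4_int2 (s : ℝ) (hs1 : s < 1) :
    IntegrableOn (fun t : ℝ => (t - 1) ^ (-s)) (Set.Ioo (1:ℝ) 2) := by
  have h0 : IntervalIntegrable (fun x : ℝ => x ^ (-s)) volume 0 1 :=
    intervalIntegral.intervalIntegrable_rpow' (by linarith)
  have h1 := h0.comp_sub_right 1
  rw [show (0:ℝ)+1 = 1 by norm_num, show (1:ℝ)+1 = 2 by norm_num] at h1
  exact ((intervalIntegrable_iff_integrableOn_Ioc_of_le (by norm_num)).1 h1).mono_set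
    Set.Ioo_subset_Ioc_self

lemma stmt4_int3 (s : ℝ) (hs1 : s < 1) :
    IntegrableOn (fun τ : ℝ => (1 - τ) ^ (-s)) (Set.Ioo (1/2:ℝ) 1) := by
  have h0 : IntervalIntegrable (fun x : ℝ => x ^ (-s)) volume 0 (1/2) :=
    intervalIntegral.intervalIntegrable_rpow' (by linarith)
  have h1 := (h0.comp_sub_left 1).symm
  rw [show (1:ℝ)-0 = 1 by norm_num, show (1:ℝ)-1/2 = 1/2 by norm_num] at h1
  exact ((intervalIntegrable_iff_integrableOn_Ioc_of_le (by norm_num)).1 h1).mono_set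
    Set.Ioo_subset_Ioc_self

lemma stmt4_mvt (s : ℝ) (hs0 : 0 < s) (hs1 : s < 1) {τ t : ℝ} (hτ : 1/2 ≤ τ) (hτt : τ < t) :
    t ^ s - τ ^ s ≤ 2 * (t - τ) := by
  have hτ0 : (0:ℝ) < τ := by linarith
  obtain ⟨c, hc, hceq⟩ := exists_hasDerivAt_eq_slope (fun r : ℝ => r ^ s)
    (fun r => s * r ^ (s - 1)) hτt
    (fun x hx => (Real.continuousAt_rpow_const x s
      (Or.inl (by nlinarith [hx.1] : x ≠ 0))).continuousWithinAt)
    (fun x hx => Real.hasDerivAt_rpow_const (Or.inl (by nlinarith [hx.1] : x ≠ 0)))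
  have hc2 : c ^ (s-1) ≤ 2 := by
    have h1 : c ^ (s-1) ≤ (1/2:ℝ) ^ (s-1) :=
      Real.rpow_le_rpow_of_nonpos (by norm_num) (le_trans hτ hc.1.le) (by linarith)
    have h2 : (1/2:ℝ) ^ (s-1) = 2 ^ (1-s) := by
      rw [show (1/2:ℝ) = 2⁻¹ by norm_num, ← Real.rpow_neg_one 2,
        ← Real.rpow_mul (by norm_num)]
      ring_nf
    have h3 : (2:ℝ) ^ (1-s) ≤ 2 ^ (1:ℝ) :=
      Real.rpow_le_rpow_of_exponent_le one_le_two (by linarith)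
    rw [Real.rpow_one] at h3
    linarith [h2 ▸ h1]
  have heq := (eq_div_iff (by linarith : t - τ ≠ 0)).1 hceq
  have hcpos : (0:ℝ) ≤ c ^ (s-1) := Real.rpow_nonneg (by nlinarith [hc.1] : (0:ℝ) ≤ c) _
  have hprod : s * c ^ (s-1) ≤ 1 * 2 := mul_le_mul hs1.le hc2 hcpos (by norm_num)
  nlinarith [heq, hprod, sub_pos.2 hτt, mul_nonneg hs0.le hcpos]

lemma stmt4_amgm (s : ℝ) (hs0 : 0 < s) {τ t : ℝ} (ht : 1 < t) (hτ : τ < 1) :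
    (t - τ) ^ (-(2*s)) ≤ (t - 1) ^ (-s) * (1 - τ) ^ (-s) := by
  have hA : (0:ℝ) < t - 1 := by linarith
  have hB : (0:ℝ) < 1 - τ := by linarith
  have hAB : (0:ℝ) < t - τ := by linarith
  have key : (t-1) * (1-τ) ≤ ((t-τ)/2)^2 := by nlinarith [sq_nonneg ((t-1)-(1-τ))]
  have h1 : ((t-1)*(1-τ)) ^ s ≤ (t - τ) ^ (2*s) := by
    calc ((t-1)*(1-τ)) ^ s ≤ (((t-τ)/2)^2) ^ s :=
          Real.rpow_le_rpow (by positivity) key hs0.le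
    _ = ((t-τ)/2) ^ (2*s) := by
          rw [← Real.rpow_natCast ((t-τ)/2) 2, ← Real.rpow_mul (by positivity)]
          norm_num
    _ ≤ (t-τ) ^ (2*s) := Real.rpow_le_rpow (by positivity) (by linarith) (by positivity)
  rw [Real.rpow_neg hAB.le, Real.rpow_neg hA.le, Real.rpow_neg hB.le, ← mul_inv,
    ← Real.mul_rpow hA.le hB.le]
  exact inv_anti₀ (by positivity) h1

end stmt4aux

set_option maxHeartbeats 2000000 in
theorem stmt4 (s : ℝ) (hs : s ∈ Set.Ioo (0:ℝ) 1) (u : ℝ → ℝ) (ℓ0 : ℝ)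
    (hmeas : Measurable u) (hbdd : ∃ C, ∀ x, |u x| ≤ C)
    (hzero : ∀ x ≤ (0:ℝ), u x = 0)
    (hext : ∃ g : ℝ → ℝ, ContDiffOn ℝ 1 g (Set.Ici 0) ∧
      (∀ x > (0:ℝ), g x = u x / x ^ s) ∧ g 0 = ℓ0) :
    Tendsto (fun a : ℝ => ∫ x in Set.Ioi a, ∫ y in Set.Ioo (0:ℝ) a,
        (u x - u y) ^ 2 / |x - y| ^ (2 + 2 * s))
      (nhdsWithin 0 (Set.Ioi 0))
      (nhds (ℓ0 ^ 2 * ∫ t in Set.Ioi (1:ℝ), ∫ τ in Set.Ioo (0:ℝ) 1,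
        (t ^ s - τ ^ s) ^ 2 / (t - τ) ^ (2 + 2 * s))) := by
  obtain ⟨hs0, hs1⟩ := hs
  obtain ⟨C, hC⟩ := hbdd
  obtain ⟨g, hg, hgu, hg0⟩ := hext
  have hC0 : 0 ≤ C := le_trans (abs_nonneg _) (hC 0)
  have hgc : ContinuousOn g (Set.Icc 0 2) := hg.continuousOn.mono Set.Icc_subset_Ici_self
  obtain ⟨G, hG⟩ : ∃ G, ∀ x ∈ Set.Icc (0:ℝ) 2, |g x| ≤ G := by
    obtain ⟨G, hG⟩ := isCompact_Icc.exists_bound_of_continuousOn hgc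
    exact ⟨G, fun x hx => by simpa [Real.norm_eq_abs] using hG x hx⟩
  have hG0 : 0 ≤ G := le_trans (abs_nonneg _) (hG 0 ⟨le_refl 0, by norm_num⟩)
  have hgd : DifferentiableOn ℝ g (Set.Ici 0) := hg.differentiableOn one_ne_zero
  obtain ⟨K, hK0, hKg⟩ : ∃ K, 0 ≤ K ∧ ∀ x ∈ Set.Icc (0:ℝ) 2, ∀ y ∈ Set.Icc (0:ℝ) 2,
      |g x - g y| ≤ K * |x - y| := by
    have hgd' : ContinuousOn (derivWithin g (Set.Ici 0)) (Set.Ici 0) :=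
      hg.continuousOn_derivWithin (uniqueDiffOn_Ici 0) le_rfl
    obtain ⟨K, hK⟩ := isCompact_Icc.exists_bound_of_continuousOn
      (hgd'.mono (Set.Icc_subset_Ici_self : Set.Icc (0:ℝ) 2 ⊆ _))
    refine ⟨K, le_trans (norm_nonneg _) (hK 0 ⟨le_refl 0, by norm_num⟩), fun x hx y hy => ?_⟩
    have := Convex.norm_image_sub_le_of_norm_hasDerivWithin_le
      (f := g) (f' := derivWithin g (Set.Ici 0)) (C := K) (s := Set.Icc (0:ℝ) 2)
      (fun z hz => ((hgd z (Set.Icc_subset_Ici_self hz)).hasDerivWithinAt).mono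
        Set.Icc_subset_Ici_self)
      hK (convex_Icc _ _) hy hx
    simpa [Real.norm_eq_abs] using this
  have hu : ∀ x : ℝ, 0 < x → u x = x ^ s * g x := by
    intro x hx
    rw [hgu x hx, mul_div_cancel₀ _ (Real.rpow_pos_of_pos hx s).ne']
  set M := max G C with hMdef
  have hM0 : 0 ≤ M := le_trans hG0 (le_max_left _ _)
  have hA : ∀ x : ℝ, 0 ≤ x → |u x| ≤ M * x ^ s := by
    intro x hx
    rcases eq_or_lt_of_le hx with h | h
    · rw [← h, hzero 0 le_rfl, Real.zero_rpow hs0.ne']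
      simp
    rcases le_or_gt x 1 with h1 | h1
    · have hxs : (0:ℝ) ≤ x ^ s := Real.rpow_nonneg hx _
      have hGx := hG x ⟨hx, by linarith⟩
      rw [hu x h, abs_mul, abs_of_nonneg hxs]
      have hMG : G ≤ M := le_max_left _ _
      nlinarith [abs_nonneg (g x)]
    · have h2 : (1:ℝ) ≤ x ^ s := by
        have := Real.rpow_le_rpow (by norm_num : (0:ℝ) ≤ 1) h1.le hs0.le
        rwa [Real.one_rpow] at this
      calc |u x| ≤ C := hC x
      _ ≤ C * x ^ s := le_mul_of_one_le_right hC0 h2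
      _ ≤ M * x ^ s := mul_le_mul_of_nonneg_right (le_max_right _ _) (by linarith)
  set Q : ℝ := (2*G+K)^2 with hQdef
  set F : ℝ → ℝ × ℝ → ℝ := fun a z =>
    ((u (a * z.1) - u (a * z.2)) / a ^ s) ^ 2 / (z.1 - z.2) ^ (2 + 2*s) with hFdef
  set ψ : ℝ × ℝ → ℝ := fun z => (z.1 ^ s - z.2 ^ s) ^ 2 / (z.1 - z.2) ^ (2 + 2*s) with hψdef
  set Φ : ℝ × ℝ → ℝ := fun z =>
      (64*M^2 * z.1 ^ (-2:ℝ)) * (fun _ : ℝ => (1:ℝ)) z.2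
    + (Set.Ioo (1:ℝ) 2).indicator (fun _ => 256*M^2) z.1 * (fun _ : ℝ => (1:ℝ)) z.2
    + (Set.Ioo (1:ℝ) 2).indicator (fun t => Q * (t-1) ^ (-s)) z.1
        * (Set.Ioo (1/2:ℝ) 1).indicator (fun τ => (1-τ) ^ (-s)) z.2 with hΦdef
  set μΩ : Measure (ℝ × ℝ) :=
    (volume.restrict (Set.Ioi (1:ℝ))).prod (volume.restrict (Set.Ioo (0:ℝ) 1)) with hμdef
  have hconst1 : Integrable (fun _ : ℝ => (1:ℝ)) (volume.restrict (Set.Ioo (0:ℝ) 1)) := by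
    refine integrableOn_const ?_
    rw [Real.volume_Ioo]
    exact ENNReal.ofReal_lt_top.ne
  have h_int : Integrable Φ μΩ := by
    rw [hΦdef, hμdef]
    apply Integrable.add
    apply Integrable.add
    · exact Integrable.mul_prod (stmt4_int1.const_mul (64*M^2)) hconst1
    · refine Integrable.mul_prod ?_ hconst1
      rw [integrable_indicator_iff measurableSet_Ioo]
      unfold IntegrableOn
      rw [Measure.restrict_restrict measurableSet_Ioo,
        Set.inter_eq_left.2 Set.Ioo_subset_Ioi_self]
      refine integrableOn_const ?_
      rw [Real.volume_Ioo]
      exact ENNReal.ofReal_lt_top.ne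
    · refine Integrable.mul_prod ?_ ?_
      · rw [integrable_indicator_iff measurableSet_Ioo]
        unfold IntegrableOn
        rw [Measure.restrict_restrict measurableSet_Ioo,
          Set.inter_eq_left.2 Set.Ioo_subset_Ioi_self]
        exact (stmt4_int2 s hs1).const_mul Q
      · rw [integrable_indicator_iff measurableSet_Ioo]
        unfold IntegrableOn
        rw [Measure.restrict_restrict measurableSet_Ioo,
          Set.inter_eq_left.2 (Set.Ioo_subset_Ioo (by norm_num) le_rfl)]
        exact stmt4_int3 s hs1
  have hFmeas : ∀ a : ℝ, AEStronglyMeasurable (F a) μΩ := by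
    intro a
    apply Measurable.aestronglyMeasurable
    rw [hFdef]
    have h1 : Measurable fun z : ℝ × ℝ => u (a * z.1) := hmeas.comp (measurable_fst.const_mul a)
    have h2 : Measurable fun z : ℝ × ℝ => u (a * z.2) := hmeas.comp (measurable_snd.const_mul a)
    fun_prop
  have hψmeas : AEStronglyMeasurable (fun z => ℓ0^2 * ψ z) μΩ := by
    apply Measurable.aestronglyMeasurable
    rw [hψdef]
    fun_prop
  have hQ0 : 0 ≤ Q := by rw [hQdef]; positivity
  have hdom : ∀ a ∈ Set.Ioc (0:ℝ) 1, ∀ z ∈ Set.Ioi (1:ℝ) ×ˢ Set.Ioo (0:ℝ) 1,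
      |F a z| ≤ Φ z := by
    rintro a ⟨ha0, ha1⟩ ⟨t, τ⟩ ⟨ht, hτ0, hτ1⟩
    simp only [Set.mem_Ioi] at ht
    have ht0 : (0:ℝ) < t := lt_trans one_pos ht
    have htτ : (0:ℝ) < t - τ := by linarith
    have has : (0:ℝ) < a ^ s := Real.rpow_pos_of_pos ha0 s
    have hD : (0:ℝ) < (t - τ) ^ (2+2*s) := Real.rpow_pos_of_pos htτ _
    have hts : (0:ℝ) < t ^ s := Real.rpow_pos_of_pos ht0 s
    have hFval : F a (t, τ) = ((u (a*t) - u (a*τ)) / a ^ s) ^ 2 / (t - τ) ^ (2+2*s) := rfl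
    have hFnn : 0 ≤ F a (t, τ) := by rw [hFval]; positivity
    rw [abs_of_nonneg hFnn]
    have hnumA : |(u (a*t) - u (a*τ)) / a ^ s| ≤ 2*M*t^s := by
      have h1 : |u (a*t)| ≤ M * (a^s * t^s) := by
        have := hA (a*t) (by positivity)
        rwa [Real.mul_rpow ha0.le ht0.le] at this
      have h2 : |u (a*τ)| ≤ M * (a^s * τ^s) := by
        have := hA (a*τ) (by positivity)
        rwa [Real.mul_rpow ha0.le hτ0.le] at this
      have h3 : τ^s ≤ t^s := Real.rpow_le_rpow hτ0.le (by linarith) hs0.le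
      rw [abs_div, abs_of_pos has, div_le_iff₀ has]
      calc |u (a*t) - u (a*τ)| ≤ |u (a*t)| + |u (a*τ)| := abs_sub _ _
      _ ≤ 2*M*t^s * a^s := by
        nlinarith [mul_le_mul_of_nonneg_left h3 (mul_nonneg hM0 has.le)]
    have hsq : ((u (a*t) - u (a*τ)) / a^s)^2 ≤ (2*M*t^s)^2 := by
      rw [← sq_abs]
      exact pow_le_pow_left₀ (abs_nonneg _) hnumA 2
    have hΦval : Φ (t, τ) = 64*M^2 * t^(-2:ℝ) * 1
        + (Set.Ioo (1:ℝ) 2).indicator (fun _ => 256*M^2) t * 1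
        + (Set.Ioo (1:ℝ) 2).indicator (fun t => Q * (t-1)^(-s)) t
          * (Set.Ioo (1/2:ℝ) 1).indicator (fun τ => (1-τ)^(-s)) τ := rfl
    have hind1 : 0 ≤ 64*M^2 * t^(-2:ℝ) :=
      mul_nonneg (by positivity) (Real.rpow_nonneg ht0.le _)
    have hind2 : 0 ≤ (Set.Ioo (1:ℝ) 2).indicator (fun _ => 256*M^2) t :=
      Set.indicator_nonneg (fun _ _ => by positivity) t
    have hind3 : 0 ≤ (Set.Ioo (1:ℝ) 2).indicator (fun t => Q * (t-1)^(-s)) t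
        * (Set.Ioo (1/2:ℝ) 1).indicator (fun τ => (1-τ)^(-s)) τ :=
      mul_nonneg
        (Set.indicator_nonneg (fun x hx =>
          mul_nonneg hQ0 (Real.rpow_nonneg (by linarith [hx.1] : (0:ℝ) ≤ x - 1) _)) t)
        (Set.indicator_nonneg (fun x hx =>
          Real.rpow_nonneg (by linarith [hx.2] : (0:ℝ) ≤ 1 - x) _) τ)
    have hpow4 : ((2:ℝ))^(4:ℝ) = 16 := by
      rw [show (4:ℝ) = ((4:ℕ):ℝ) by norm_num, Real.rpow_natCast]
      norm_num
    rcases le_or_gt 2 t with h2t | h2t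
    · -- region t ≥ 2
      have hden : t^(2+2*s)/16 ≤ (t-τ)^(2+2*s) := by
        have ht2 : t/2 ≤ t - τ := by linarith
        have e1 : (t/2)^(2+2*s) ≤ (t-τ)^(2+2*s) :=
          Real.rpow_le_rpow (by positivity) ht2 (by linarith)
        have e2 : (t/2)^(2+2*s) = t^(2+2*s) / 2^(2+2*s) :=
          Real.div_rpow ht0.le (by norm_num) _
        have e3 : (2:ℝ)^(2+2*s) ≤ 16 := by
          have := Real.rpow_le_rpow_of_exponent_le one_le_two (by linarith : 2+2*s ≤ (4:ℝ))
          rwa [hpow4] at this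
        have h2q : (0:ℝ) < 2^(2+2*s) := by positivity
        have e4 : t^(2+2*s)/16 ≤ t^(2+2*s)/2^(2+2*s) := by
          rw [div_le_div_iff₀ (by norm_num) h2q]
          nlinarith [mul_le_mul_of_nonneg_left e3 (Real.rpow_nonneg ht0.le (2+2*s))]
        linarith [e2 ▸ e1]
      have hb : F a (t,τ) ≤ 64*M^2 * t^(-2:ℝ) := by
        have step1 : F a (t,τ) ≤ (2*M*t^s)^2 / (t^(2+2*s)/16) := by
          rw [hFval]
          exact div_le_div₀ (by positivity) hsq (by positivity) hden
        have e5 : (2*M*t^s)^2 / (t^(2+2*s)/16) = 64*M^2 * (t^(s*2) / t^(2+2*s)) := by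
          rw [mul_pow, mul_pow, ← Real.rpow_natCast (t^s) 2, ← Real.rpow_mul ht0.le]
          push_cast
          ring
        have e6 : t^(s*2) / t^(2+2*s) = t^(-2:ℝ) := by
          rw [← Real.rpow_sub ht0]
          congr 1
          ring
        rw [e5, e6] at step1
        exact step1
      rw [hΦval]
      linarith
    rcases le_or_gt τ (1/2) with hτh | hτh
    · -- region 1 < t < 2, τ ≤ 1/2
      have hts2 : t^s ≤ 2 := by
        have e1 : t^s ≤ 2^s := Real.rpow_le_rpow ht0.le h2t.le hs0.le
        have e2 : (2:ℝ)^s ≤ 2^(1:ℝ) := Real.rpow_le_rpow_of_exponent_le one_le_two hs1.le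
        rw [Real.rpow_one] at e2
        linarith
      have h4 : (t^s)^2 ≤ 4 := by nlinarith
      have hnum : ((u (a*t) - u (a*τ))/a^s)^2 ≤ 16*M^2 := by
        nlinarith [hsq, h4, sq_nonneg M]
      have hden : (1/16:ℝ) ≤ (t-τ)^(2+2*s) := by
        have e1 : ((1:ℝ)/2)^(2+2*s) ≤ (t-τ)^(2+2*s) :=
          Real.rpow_le_rpow (by norm_num) (by linarith) (by linarith)
        have e2 : ((1:ℝ)/2)^(4:ℝ) ≤ ((1:ℝ)/2)^(2+2*s) :=
          Real.rpow_le_rpow_of_exponent_ge (by norm_num) (by norm_num) (by linarith)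
        have e3 : ((1:ℝ)/2)^(4:ℝ) = 1/16 := by
          rw [show (4:ℝ) = ((4:ℕ):ℝ) by norm_num, Real.rpow_natCast]
          norm_num
        rw [e3] at e2
        linarith
      have hb : F a (t,τ) ≤ 256*M^2 := by
        calc F a (t,τ) = ((u (a*t) - u (a*τ)) / a ^ s) ^ 2 / (t - τ) ^ (2+2*s) := hFval
        _ ≤ (16*M^2) / (1/16) := div_le_div₀ (by positivity) hnum (by norm_num) hden
        _ = 256*M^2 := by ring
      have hmemIoo : t ∈ Set.Ioo (1:ℝ) 2 := ⟨ht, h2t⟩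
      rw [hΦval, Set.indicator_of_mem hmemIoo]
      linarith
    · -- region 1 < t < 2, 1/2 < τ < 1
      have hτt : τ < t := by linarith
      have hat2 : a*t ≤ 2 := by nlinarith
      have hmemt : a*t ∈ Set.Icc (0:ℝ) 2 := ⟨by positivity, hat2⟩
      have hmemτ : a*τ ∈ Set.Icc (0:ℝ) 2 := ⟨by positivity, by nlinarith⟩
      have hτs1 : τ^s ≤ 1 := Real.rpow_le_one hτ0.le hτ1.le hs0.le
      have hdiff : u (a*t) - u (a*τ)
          = a^s * ((t^s - τ^s) * g (a*t) + τ^s * (g (a*t) - g (a*τ))) := by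
        rw [hu _ (mul_pos ha0 ht0), hu _ (mul_pos ha0 hτ0),
          Real.mul_rpow ha0.le ht0.le, Real.mul_rpow ha0.le hτ0.le]
        ring
      have hgat : |g (a*t)| ≤ G := hG _ hmemt
      have hgK : |g (a*t) - g (a*τ)| ≤ K * (a*(t-τ)) := by
        have h5 := hKg _ hmemt _ hmemτ
        rwa [show |a*t - a*τ| = a*(t-τ) by
          rw [show a*t - a*τ = a*(t-τ) by ring]
          exact abs_of_pos (by positivity)] at h5
      have htsτs : τ^s ≤ t^s := Real.rpow_le_rpow hτ0.le hτt.le hs0.le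
      have hnumB : |(u (a*t) - u (a*τ)) / a^s| ≤ (2*G+K)*(t-τ) := by
        rw [hdiff, mul_div_cancel_left₀ _ has.ne']
        have hmvt := stmt4_mvt s hs0 hs1 hτh.le hτt
        have p1 : (t^s - τ^s) * |g (a*t)| ≤ (2*(t-τ)) * G :=
          mul_le_mul hmvt hgat (abs_nonneg _) (by linarith)
        have p2 : τ^s * |g (a*t) - g (a*τ)| ≤ 1 * (K * (a*(t-τ))) :=
          mul_le_mul hτs1 hgK (abs_nonneg _) one_pos.le
        have p3 : K * (a*(t-τ)) ≤ K * (t-τ) := by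
          nlinarith [mul_nonneg (mul_nonneg hK0 (by linarith : (0:ℝ) ≤ 1-a)) htτ.le]
        calc |(t^s - τ^s) * g (a*t) + τ^s * (g (a*t) - g (a*τ))|
            ≤ |(t^s - τ^s) * g (a*t)| + |τ^s * (g (a*t) - g (a*τ))| := abs_add_le _ _
          _ = (t^s - τ^s) * |g (a*t)| + τ^s * |g (a*t) - g (a*τ)| := by
              rw [abs_mul, abs_mul, abs_of_nonneg (by linarith : (0:ℝ) ≤ t^s - τ^s),
                abs_of_nonneg (Real.rpow_nonneg hτ0.le _)]
          _ ≤ (2*G+K)*(t-τ) := by linarith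
      have hsqB : ((u (a*t) - u (a*τ))/a^s)^2 ≤ Q * (t-τ)^2 := by
        rw [← sq_abs]
        calc |(u (a*t) - u (a*τ))/a^s|^2 ≤ ((2*G+K)*(t-τ))^2 :=
          pow_le_pow_left₀ (abs_nonneg _) hnumB 2
        _ = Q * (t-τ)^2 := by rw [hQdef]; ring
      have hb : F a (t,τ) ≤ Q * ((t-1)^(-s) * (1-τ)^(-s)) := by
        have step1 : F a (t,τ) ≤ Q * (t-τ)^2 / (t-τ)^(2+2*s) := by
          rw [hFval]
          gcongr
        have step2 : Q * (t-τ)^2 / (t-τ)^(2+2*s) = Q * (t-τ)^(-(2*s)) := by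
          rw [mul_div_assoc]
          congr 1
          rw [← Real.rpow_natCast (t-τ) 2, ← Real.rpow_sub htτ]
          congr 1
          push_cast
          ring
        calc F a (t,τ) ≤ Q * (t-τ)^(-(2*s)) := by rw [← step2]; exact step1
        _ ≤ Q * ((t-1)^(-s) * (1-τ)^(-s)) :=
          mul_le_mul_of_nonneg_left (stmt4_amgm s hs0 ht hτ1) hQ0
      have hmemIoo : t ∈ Set.Ioo (1:ℝ) 2 := ⟨ht, h2t⟩
      have hmemIoo2 : τ ∈ Set.Ioo (1/2:ℝ) 1 := ⟨hτh, hτ1⟩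
      rw [hΦval, Set.indicator_of_mem hmemIoo, Set.indicator_of_mem hmemIoo2,
        Set.indicator_of_mem hmemIoo]
      have hfin : Q * (t-1)^(-s) * (1-τ)^(-s) = Q * ((t-1)^(-s) * (1-τ)^(-s)) := by ring
      have h256 : (0:ℝ) ≤ 256*M^2 := by positivity
      linarith [hfin ▸ hb]
  have hgtend : ∀ t : ℝ, 0 < t → Tendsto (fun a : ℝ => g (a * t)) (𝓝[>] (0:ℝ)) (𝓝 ℓ0) := by
    intro t ht0
    rw [← hg0]
    apply (hg.continuousOn.continuousWithinAt Set.self_mem_Ici).tendsto.comp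
    apply tendsto_nhdsWithin_of_tendsto_nhds_of_eventually_within
    · have h1 : Tendsto (fun a : ℝ => a * t) (𝓝 0) (𝓝 (0 * t)) :=
        (continuous_id.mul continuous_const).tendsto 0
      rw [zero_mul] at h1
      exact h1.mono_left nhdsWithin_le_nhds
    · filter_upwards [self_mem_nhdsWithin] with a (ha : 0 < a)
      exact mul_nonneg ha.le ht0.le
  have hlim : ∀ z ∈ Set.Ioi (1:ℝ) ×ˢ Set.Ioo (0:ℝ) 1,
      Tendsto (fun a => F a z) (𝓝[>] (0:ℝ)) (𝓝 (ℓ0^2 * ψ z)) := by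
    rintro ⟨t, τ⟩ ⟨ht, hτ0, hτ1⟩
    simp only [Set.mem_Ioi] at ht
    have ht0 : (0:ℝ) < t := lt_trans one_pos ht
    have hφ : Tendsto (fun a : ℝ => t ^ s * g (a * t) - τ ^ s * g (a * τ))
        (𝓝[>] (0:ℝ)) (𝓝 (t ^ s * ℓ0 - τ ^ s * ℓ0)) :=
      (tendsto_const_nhds.mul (hgtend t ht0)).sub (tendsto_const_nhds.mul (hgtend τ hτ0))
    have hmain := (hφ.pow 2).div_const ((t - τ) ^ (2 + 2*s))
    have hval : (t ^ s * ℓ0 - τ ^ s * ℓ0) ^ 2 / (t - τ) ^ (2 + 2*s) = ℓ0^2 * ψ (t, τ) := by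
      simp only [hψdef]
      ring
    rw [hval] at hmain
    apply Tendsto.congr' ?_ hmain
    filter_upwards [self_mem_nhdsWithin] with a (ha : 0 < a)
    simp only [hFdef]
    have has : (0:ℝ) < a ^ s := Real.rpow_pos_of_pos ha s
    rw [hu _ (mul_pos ha ht0), hu _ (mul_pos ha hτ0), Real.mul_rpow ha.le ht0.le,
      Real.mul_rpow ha.le hτ0.le]
    congr 1
    field_simp
  have hmemΩ : ∀ᵐ z ∂μΩ, z ∈ Set.Ioi (1:ℝ) ×ˢ Set.Ioo (0:ℝ) 1 := by
    rw [hμdef, Measure.prod_restrict]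
    exact ae_restrict_mem (measurableSet_Ioi.prod measurableSet_Ioo)
  have hIoc : Set.Ioc (0:ℝ) 1 ∈ 𝓝[>] (0:ℝ) :=
    Ioc_mem_nhdsGT_of_mem (Set.left_mem_Ico.2 one_pos)
  have hbd : ∀ a ∈ Set.Ioc (0:ℝ) 1, ∀ᵐ z ∂μΩ, ‖F a z‖ ≤ Φ z := by
    intro a ha
    filter_upwards [hmemΩ] with z hz
    rw [Real.norm_eq_abs]
    exact hdom a ha z hz
  have hDCT : Tendsto (fun a => ∫ z, F a z ∂μΩ) (𝓝[>] (0:ℝ))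
      (𝓝 (∫ z, ℓ0^2 * ψ z ∂μΩ)) := by
    apply tendsto_integral_filter_of_dominated_convergence Φ
    · exact Eventually.of_forall hFmeas
    · filter_upwards [hIoc] with a ha using hbd a ha
    · exact h_int
    · filter_upwards [hmemΩ] with z hz using hlim z hz
  have hFint : ∀ a ∈ Set.Ioc (0:ℝ) 1, Integrable (F a) μΩ :=
    fun a ha => Integrable.mono' h_int (hFmeas a) (hbd a ha)
  have hψint : Integrable (fun z => ℓ0^2 * ψ z) μΩ := by
    apply Integrable.mono' h_int hψmeas
    filter_upwards [hmemΩ] with z hz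
    rw [Real.norm_eq_abs]
    have h1 : Tendsto (fun a => F a z) (𝓝[>] (0:ℝ)) (𝓝 (ℓ0^2 * ψ z)) := hlim z hz
    have h2 : ∀ᶠ a in 𝓝[>] (0:ℝ), F a z ≤ Φ z := by
      filter_upwards [hIoc] with a ha
      exact le_trans (le_abs_self _) (hdom a ha z hz)
    have h3 : ∀ᶠ a in 𝓝[>] (0:ℝ), -Φ z ≤ F a z := by
      filter_upwards [hIoc] with a ha
      exact le_trans (neg_le_neg (hdom a ha z hz)) (neg_abs_le _)
    have hle := le_of_tendsto h1 h2
    have hge := ge_of_tendsto h1 h3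
    rw [abs_le]
    exact ⟨hge, hle⟩
  have hEq : ∀ᶠ a in 𝓝[>] (0:ℝ),
      (∫ x in Set.Ioi a, ∫ y in Set.Ioo (0:ℝ) a,
        (u x - u y) ^ 2 / |x - y| ^ (2 + 2 * s)) = ∫ z, F a z ∂μΩ := by
    filter_upwards [hIoc] with a ha
    obtain ⟨ha0, ha1⟩ := ha
    have has : (0:ℝ) < a ^ s := Real.rpow_pos_of_pos ha0 s
    calc (∫ x in Set.Ioi a, ∫ y in Set.Ioo (0:ℝ) a, (u x - u y) ^ 2 / |x - y| ^ (2 + 2 * s))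
        = ∫ x in Set.Ioi a,
            (a * ∫ τ in Set.Ioo (0:ℝ) 1, (u x - u (a*τ)) ^ 2 / |x - a*τ| ^ (2 + 2 * s)) :=
          setIntegral_congr_fun measurableSet_Ioi (fun x _ =>
            stmt4_cov_Ioo a ha0 (fun y => (u x - u y) ^ 2 / |x - y| ^ (2 + 2 * s)))
      _ = a * ∫ t in Set.Ioi (1:ℝ),
            (a * ∫ τ in Set.Ioo (0:ℝ) 1, (u (a*t) - u (a*τ)) ^ 2 / |a*t - a*τ| ^ (2 + 2 * s)) :=
          stmt4_cov_Ioi a ha0 _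
      _ = ∫ t in Set.Ioi (1:ℝ),
            (a * (a * ∫ τ in Set.Ioo (0:ℝ) 1,
              (u (a*t) - u (a*τ)) ^ 2 / |a*t - a*τ| ^ (2 + 2 * s))) := by
          rw [← integral_const_mul]
      _ = ∫ t in Set.Ioi (1:ℝ), ∫ τ in Set.Ioo (0:ℝ) 1, F a (t, τ) := by
          refine setIntegral_congr_fun measurableSet_Ioi (fun t ht => ?_)
          simp only [Set.mem_Ioi] at ht
          rw [← mul_assoc, ← integral_const_mul]
          refine setIntegral_congr_fun measurableSet_Ioo (fun τ hτ => ?_)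
          obtain ⟨hτ0, hτ1⟩ := hτ
          have htτ : (0:ℝ) < t - τ := by linarith
          have habs : |a*t - a*τ| = a * (t - τ) := by
            rw [show a*t - a*τ = a*(t-τ) by ring]
            exact abs_of_pos (mul_pos ha0 htτ)
          rw [habs, Real.mul_rpow ha0.le htτ.le]
          have hD : (0:ℝ) < (t-τ) ^ (2+2*s) := Real.rpow_pos_of_pos htτ _
          have hexp : a ^ (2+2*s) = a^2 * (a^s)^2 := by
            rw [← Real.rpow_natCast a 2, ← Real.rpow_natCast (a^s) 2, ← Real.rpow_mul ha0.le,
              ← Real.rpow_add ha0]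
            congr 1
            push_cast
            ring
          simp only [hFdef]
          rw [hexp]
          field_simp
      _ = ∫ z, F a z ∂μΩ := by
          rw [hμdef]
          exact integral_integral (hFint a ⟨ha0, ha1⟩)
  have hRHS : (∫ z, ℓ0^2 * ψ z ∂μΩ)
      = ℓ0 ^ 2 * ∫ t in Set.Ioi (1:ℝ), ∫ τ in Set.Ioo (0:ℝ) 1,
        (t ^ s - τ ^ s) ^ 2 / (t - τ) ^ (2 + 2 * s) := by
    have hψint' : Integrable (Function.uncurry fun t τ => ℓ0^2 * ψ (t, τ))
        ((volume.restrict (Set.Ioi (1:ℝ))).prod (volume.restrict (Set.Ioo (0:ℝ) 1))) := by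
      rw [hμdef] at hψint
      exact hψint
    calc (∫ z, ℓ0^2 * ψ z ∂μΩ)
        = ∫ t in Set.Ioi (1:ℝ), ∫ τ in Set.Ioo (0:ℝ) 1, ℓ0^2 * ψ (t, τ) := by
          rw [hμdef]
          exact (integral_integral hψint').symm
      _ = ℓ0^2 * ∫ t in Set.Ioi (1:ℝ), ∫ τ in Set.Ioo (0:ℝ) 1, ψ (t, τ) := by
          simp_rw [integral_const_mul]
      _ = ℓ0 ^ 2 * ∫ t in Set.Ioi (1:ℝ), ∫ τ in Set.Ioo (0:ℝ) 1,
            (t ^ s - τ ^ s) ^ 2 / (t - τ) ^ (2 + 2 * s) := by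
          simp only [hψdef]
  rw [← hRHS]
  exact Tendsto.congr' (hEq.mono fun a ha => ha.symm) hDCT
end

section
/- For $s \in (0,1)$, the double integral $\int_1^{+\infty}\int_0^1 \frac{(t^s-\tau^s)^2}{(t-\tau)^{2+2s}}\,d\tau\,dt$ is finite. -/
open MeasureTheory Real Set intervalIntegral

lemma aux_sub_rpow {x y s : ℝ} (hy : 0 ≤ y) (hyx : y ≤ x) (hs0 : 0 ≤ s) (hs1 : s ≤ 1) :
    x ^ s - y ^ s ≤ (x - y) ^ s := by
  have hxy : (0:ℝ) ≤ x - y := by linarith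
  have key := NNReal.rpow_add_le_add_rpow ((x - y).toNNReal) (y.toNNReal) hs0 hs1
  have hx0 : 0 ≤ x := le_trans hy hyx
  have h1 : (x - y).toNNReal + y.toNNReal = x.toNNReal := by
    ext; simp [Real.toNNReal_of_nonneg, hxy, hy, hx0]
  rw [h1] at key
  have := (NNReal.coe_le_coe).2 key
  push_cast [NNReal.coe_rpow] at this
  rw [Real.coe_toNNReal _ hx0, Real.coe_toNNReal _ hxy, Real.coe_toNNReal _ hy] at this
  linarith

lemma aux_bernoulli {x y s : ℝ} (hy : 0 < y) (hyx : y ≤ x) (hs0 : 0 < s) (hs1 : s ≤ 1) :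
    x ^ s - y ^ s ≤ s * y ^ (s - 1) * (x - y) := by
  have hz : (0:ℝ) ≤ x / y - 1 := by
    rw [le_sub_iff_add_le, zero_add, le_div_iff₀ hy]; linarith
  have hb := rpow_one_add_le_one_add_mul_self (s := x / y - 1) (by linarith) hs0.le hs1
  rw [add_sub_cancel] at hb
  have hys : (0:ℝ) < y ^ s := Real.rpow_pos_of_pos hy s
  have hdiv : (x / y) ^ s = x ^ s / y ^ s := Real.div_rpow (by linarith [hy.le.trans hyx]) hy.le s
  rw [hdiv, div_le_iff₀ hys] at hb
  have hexp : y ^ (s - 1) = y ^ s / y := by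
    rw [Real.rpow_sub hy, Real.rpow_one]
  rw [hexp]
  have : (1 + s * (x / y - 1)) * y ^ s = y ^ s + s * (y ^ s / y) * (x - y) := by
    field_simp
  rw [this] at hb
  linarith

lemma aux_beta_left {a b : ℝ} (ha : -1 < a) :
    IntervalIntegrable (fun x : ℝ => x ^ a * (1 - x) ^ b) volume 0 (1/2) := by
  apply IntervalIntegrable.mul_continuousOn (intervalIntegrable_rpow' ha)
  apply ContinuousOn.rpow_const
  · exact (continuous_const.sub continuous_id).continuousOn
  · intro x hx
    rw [uIcc_of_le (by norm_num : (0:ℝ) ≤ 1/2)] at hx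
    left
    have := hx.2
    intro h; rw [sub_eq_zero] at h; linarith

lemma aux_beta {a b : ℝ} (ha : -1 < a) (hb : -1 < b) :
    IntegrableOn (fun x : ℝ => x ^ a * (1 - x) ^ b) (Set.Ioo 0 1) := by
  have h1 : IntervalIntegrable (fun x : ℝ => x ^ a * (1 - x) ^ b) volume 0 1 := by
    refine (aux_beta_left ha).trans (b := 1/2) ?_
    have h2 := (aux_beta_left hb (a := b) (b := a)).comp_sub_left 1
    have : (fun x : ℝ => (1 - x) ^ b * (1 - (1 - x)) ^ a) = fun x : ℝ => (1 - x) ^ b * x ^ a := by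
      funext x; ring_nf
    rw [this] at h2
    norm_num at h2
    have h3 : (fun x : ℝ => x ^ a * (1 - x) ^ b) = fun x : ℝ => (1 - x) ^ b * x ^ a := by
      funext x; ring
    rw [h3]
    exact h2.symm
  exact (intervalIntegrable_iff_integrableOn_Ioo_of_le (by norm_num : (0:ℝ) ≤ 1)).mp h1

lemma aux_shift {r : ℝ} (hr : -1 < r) :
    IntegrableOn (fun t : ℝ => (t - 1) ^ r) (Set.Ioc 1 2) := by
  have h := (intervalIntegrable_rpow' hr (a := 0) (b := 1)).comp_sub_right 1
  norm_num at h
  rw [intervalIntegrable_iff_integrableOn_Ioc_of_le (by norm_num : (1:ℝ) ≤ 2)] at h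
  exact h

theorem stmt5 (s : ℝ) (hs : s ∈ Set.Ioo (0:ℝ) 1) :
    IntegrableOn (fun p : ℝ × ℝ => (p.1 ^ s - p.2 ^ s) ^ 2 / (p.1 - p.2) ^ (2 + 2 * s))
      (Set.Ioi (1:ℝ) ×ˢ Set.Ioo (0:ℝ) 1) := by
  obtain ⟨hs0, hs1⟩ := hs
  set f : ℝ × ℝ → ℝ := fun p => (p.1 ^ s - p.2 ^ s) ^ 2 / (p.1 - p.2) ^ (2 + 2 * s) with hf
  have hmeas : Measurable f := by
    apply Measurable.div
    · exact ((measurable_fst.pow measurable_const).sub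
        (measurable_snd.pow measurable_const)).pow measurable_const
    · exact (measurable_fst.sub measurable_snd).pow measurable_const
  have hsplit : Set.Ioi (1:ℝ) = Set.Ioc 1 2 ∪ Set.Ioi 2 :=
    (Set.Ioc_union_Ioi_eq_Ioi (by norm_num)).symm
  rw [hsplit, Set.union_prod]
  -- generic nonnegativity and norm computation
  have hnorm : ∀ p : ℝ × ℝ, p.2 < p.1 → ‖f p‖ = f p := by
    intro p hp
    exact Real.norm_of_nonneg (div_nonneg (sq_nonneg _)
      (Real.rpow_nonneg (by linarith) _))
  apply IntegrableOn.union
  · -- near part : Ioc 1 2 × Ioo 0 1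
    set q : ℝ := (1 + s) / 2 with hq
    have hq0 : 0 < q := by rw [hq]; linarith
    have hG : IntegrableOn
        (fun p : ℝ × ℝ => (s * (p.1 - 1) ^ (-q)) * (p.2 ^ (s - 1) * (1 - p.2) ^ (-q)))
        (Set.Ioc (1:ℝ) 2 ×ˢ Set.Ioo (0:ℝ) 1) := by
      rw [IntegrableOn, Measure.volume_eq_prod, ← Measure.prod_restrict]
      exact Integrable.mul_prod ((aux_shift (by rw [hq]; linarith)).const_mul s)
        (aux_beta (by linarith) (by rw [hq]; linarith))
    refine Integrable.mono' hG hmeas.aestronglyMeasurable ?_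
    rw [ae_restrict_iff' (measurableSet_Ioc.prod measurableSet_Ioo)]
    refine ae_of_all _ ?_
    rintro ⟨t, τ⟩ ⟨⟨ht1, ht2⟩, hτ0, hτ1⟩
    have htτ : 0 < t - τ := by linarith
    have ht1' : 0 < t - 1 := by linarith
    have hτ1' : 0 < 1 - τ := by linarith
    rw [hnorm _ (by dsimp; linarith)]
    have h0 : 0 ≤ t ^ s - τ ^ s :=
      sub_nonneg.2 (Real.rpow_le_rpow hτ0.le (by linarith) hs0.le)
    have h1 : t ^ s - τ ^ s ≤ (t - τ) ^ s := aux_sub_rpow hτ0.le (by linarith) hs0.le hs1.le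
    have h2 : t ^ s - τ ^ s ≤ s * τ ^ (s - 1) * (t - τ) :=
      aux_bernoulli hτ0 (by linarith) hs0 hs1.le
    have hnum : (t ^ s - τ ^ s) ^ 2 ≤ (t - τ) ^ s * (s * τ ^ (s - 1) * (t - τ)) := by
      rw [sq]
      exact mul_le_mul h1 h2 h0 (Real.rpow_nonneg htτ.le s)
    have hden : (0:ℝ) < (t - τ) ^ (2 + 2 * s) := Real.rpow_pos_of_pos htτ (2 + 2*s)
    have hfp : f (t, τ) = (t ^ s - τ ^ s) ^ 2 / (t - τ) ^ (2 + 2 * s) := rfl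
    have stepA : f (t, τ) ≤ s * τ ^ (s - 1) * (t - τ) ^ (-(1 + s)) := by
      have : f (t, τ) ≤ ((t - τ) ^ s * (s * τ ^ (s - 1) * (t - τ))) / (t - τ) ^ (2 + 2 * s) := by
        rw [hfp]
        exact div_le_div_of_nonneg_right hnum hden.le
      refine this.trans_eq ?_
      have e1 : (t - τ) ^ s * (t - τ) = (t - τ) ^ (s + 1) := by
        rw [Real.rpow_add_one htτ.ne']
      have e2 : (t - τ) ^ (s + 1) / (t - τ) ^ (2 + 2 * s) = (t - τ) ^ (-(1 + s)) := by
        rw [← Real.rpow_sub htτ]; ring_nf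
      calc ((t - τ) ^ s * (s * τ ^ (s - 1) * (t - τ))) / (t - τ) ^ (2 + 2 * s)
          = s * τ ^ (s - 1) * ((t - τ) ^ (s + 1) / (t - τ) ^ (2 + 2 * s)) := by
            rw [← e1]; ring
        _ = s * τ ^ (s - 1) * (t - τ) ^ (-(1 + s)) := by rw [e2]
    have stepB : (t - τ) ^ (-(1 + s)) ≤ (t - 1) ^ (-q) * (1 - τ) ^ (-q) := by
      have e3 : (t - τ) ^ (-(1 + s)) = (t - τ) ^ (-q) * (t - τ) ^ (-q) := by
        rw [← Real.rpow_add htτ]; ring_nf; congr 1; rw [hq]; ring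
      rw [e3]
      exact mul_le_mul
        (Real.rpow_le_rpow_of_nonpos ht1' (by linarith) (by linarith))
        (Real.rpow_le_rpow_of_nonpos hτ1' (by linarith) (by linarith))
        (Real.rpow_nonneg htτ.le _) (Real.rpow_nonneg ht1'.le _)
    have hleft : 0 ≤ s * τ ^ (s - 1) := mul_nonneg hs0.le (Real.rpow_nonneg hτ0.le _)
    calc f (t, τ) ≤ s * τ ^ (s - 1) * ((t - 1) ^ (-q) * (1 - τ) ^ (-q)) :=
          stepA.trans (mul_le_mul_of_nonneg_left stepB hleft)
      _ = (s * (t - 1) ^ (-q)) * (τ ^ (s - 1) * (1 - τ) ^ (-q)) := by ring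
  · -- far part : Ioi 2 × Ioo 0 1
    have hG : IntegrableOn (fun p : ℝ × ℝ => (4 * p.1 ^ (-2:ℝ)) * 1)
        (Set.Ioi (2:ℝ) ×ˢ Set.Ioo (0:ℝ) 1) := by
      rw [IntegrableOn, Measure.volume_eq_prod, ← Measure.prod_restrict]
      exact Integrable.mul_prod (f := fun t : ℝ => 4 * t ^ (-2:ℝ)) (g := fun _ : ℝ => (1:ℝ))
        ((integrableOn_Ioi_rpow_of_lt (a := (-2:ℝ)) (by norm_num) (by norm_num : (0:ℝ) < 2)).const_mul 4)
        ((integrableOn_const_iff (C := (1:ℝ))).mpr (Or.inr (by simp [Real.volume_Ioo])))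
    refine Integrable.mono' hG hmeas.aestronglyMeasurable ?_
    rw [ae_restrict_iff' (measurableSet_Ioi.prod measurableSet_Ioo)]
    refine ae_of_all _ ?_
    rintro ⟨t, τ⟩ ⟨ht2, hτ0, hτ1⟩
    simp only [Set.mem_Ioi] at ht2
    have htτ : 0 < t - τ := by linarith
    have ht0 : 0 < t := by linarith
    rw [hnorm _ (by dsimp; linarith)]
    have h0 : 0 ≤ t ^ s - τ ^ s :=
      sub_nonneg.2 (Real.rpow_le_rpow hτ0.le (by linarith) hs0.le)
    have h1 : t ^ s - τ ^ s ≤ (t - τ) ^ s := aux_sub_rpow hτ0.le (by linarith) hs0.le hs1.le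
    have hnum : (t ^ s - τ ^ s) ^ 2 ≤ (t - τ) ^ (s * 2) := by
      have heq : ((t - τ) ^ s) ^ 2 = (t - τ) ^ (s * 2) := by
        rw [← Real.rpow_natCast ((t - τ) ^ s) 2, ← Real.rpow_mul htτ.le]
        norm_num
      calc (t ^ s - τ ^ s) ^ 2 ≤ ((t - τ) ^ s) ^ 2 := pow_le_pow_left₀ h0 h1 2
        _ = (t - τ) ^ (s * 2) := heq
    have hden : (0:ℝ) < (t - τ) ^ (2 + 2 * s) := Real.rpow_pos_of_pos htτ (2 + 2*s)
    have hfp : f (t, τ) = (t ^ s - τ ^ s) ^ 2 / (t - τ) ^ (2 + 2 * s) := rfl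
    have step1 : f (t, τ) ≤ (t - τ) ^ (-2:ℝ) := by
      have : f (t, τ) ≤ (t - τ) ^ (s * 2) / (t - τ) ^ (2 + 2 * s) := by
        rw [hfp]
        exact div_le_div_of_nonneg_right hnum hden.le
      refine this.trans_eq ?_
      rw [← Real.rpow_sub htτ]; ring_nf
    have step2 : (t - τ) ^ (-2:ℝ) ≤ (t / 2) ^ (-2:ℝ) :=
      Real.rpow_le_rpow_of_nonpos (by linarith) (by linarith) (by norm_num)
    have h24 : ((2:ℝ) ^ (-2:ℝ)) = 1/4 := by
      have : (-2:ℝ) = ((-2:ℤ):ℝ) := by norm_num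
      rw [this, Real.rpow_intCast]; norm_num
    have step3 : (t / 2) ^ (-2:ℝ) = 4 * t ^ (-2:ℝ) := by
      rw [Real.div_rpow ht0.le (by norm_num : (0:ℝ) ≤ 2), h24]
      ring
    show f (t, τ) ≤ 4 * t ^ (-2:ℝ) * 1
    calc f (t, τ) ≤ (t / 2) ^ (-2:ℝ) := step1.trans step2
      _ = 4 * t ^ (-2:ℝ) * 1 := by rw [step3]; ring
end

section
/- For $s \in (0,1)$, the integral $\int_{-1}^1 \frac{((t+1)^s-1)^2}{|t|^{1+2s}}\,dt$ is finite. -/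
open MeasureTheory Real

theorem stmt6 (s : ℝ) (hs : s ∈ Set.Ioo (0:ℝ) 1) :
    IntegrableOn (fun t : ℝ => ((t + 1) ^ s - 1) ^ 2 / |t| ^ (1 + 2 * s))
      (Set.Ioo (-1 : ℝ) 1) := by
  obtain ⟨hs0, hs1⟩ := hs
  set r : ℝ := 1 - 2 * s with hr
  have hexp : (-1 : ℝ) < r := by simp only [hr]; linarith
  -- the majorant |t| ^ (1 - 2s) is integrable on (-1, 1)
  have I1 : IntervalIntegrable (fun x : ℝ => |x| ^ r) volume 0 1 := by
    have h := intervalIntegral.intervalIntegrable_rpow' (a := 0) (b := 1) hexp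
    rw [intervalIntegrable_iff, Set.uIoc_of_le (by norm_num : (0:ℝ) ≤ 1)] at h ⊢
    exact h.congr_fun (fun x hx => by rw [abs_of_pos hx.1]) measurableSet_Ioc
  have I2 : IntervalIntegrable (fun x : ℝ => |x| ^ r) volume (-1) 0 := by
    have h := (IntervalIntegrable.iff_comp_neg).mp I1.symm
    simpa [abs_neg] using h
  have Imaj : IntegrableOn (fun x : ℝ => |x| ^ r) (Set.Ioo (-1:ℝ) 1) := by
    have h := (I2.trans I1)
    rw [intervalIntegrable_iff, Set.uIoc_of_le (by norm_num : (-1:ℝ) ≤ 1)] at h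
    exact h.mono_set Set.Ioo_subset_Ioc_self
  -- measurability
  have hmeas : AEStronglyMeasurable
      (fun t : ℝ => ((t + 1) ^ s - 1) ^ 2 / |t| ^ (1 + 2 * s))
      (volume.restrict (Set.Ioo (-1:ℝ) 1)) := by
    apply Measurable.aestronglyMeasurable
    fun_prop
  refine Imaj.mono' hmeas ?_
  filter_upwards [ae_restrict_mem measurableSet_Ioo] with t ht
  obtain ⟨ht1, ht2⟩ := ht
  have h1 : (0:ℝ) < t + 1 := by linarith
  -- key: |(t+1)^s - 1| ≤ |t|
  have hkey : ((t + 1) ^ s - 1) ^ 2 ≤ |t| ^ (2:ℕ) := by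
    have hub : (t + 1) ^ s - 1 ≤ |t| := by
      rcases le_or_gt 0 t with h | h
      · have : (t + 1) ^ s ≤ (t + 1) ^ (1:ℝ) :=
          rpow_le_rpow_of_exponent_le (by linarith) (by linarith)
        rw [rpow_one] at this
        rw [abs_of_nonneg h]; linarith
      · have : (t + 1) ^ s ≤ (t + 1) ^ (0:ℝ) :=
          rpow_le_rpow_of_exponent_ge h1 (by linarith) (le_of_lt hs0)
        rw [rpow_zero] at this
        rw [abs_of_neg h]; linarith
    have hlb : -|t| ≤ (t + 1) ^ s - 1 := by
      rcases le_or_gt 0 t with h | h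
      · have : (t + 1) ^ (0:ℝ) ≤ (t + 1) ^ s :=
          rpow_le_rpow_of_exponent_le (by linarith) (le_of_lt hs0)
        rw [rpow_zero] at this
        rw [abs_of_nonneg h]; linarith
      · have : (t + 1) ^ (1:ℝ) ≤ (t + 1) ^ s :=
          rpow_le_rpow_of_exponent_ge h1 (by linarith) (le_of_lt hs1)
        rw [rpow_one] at this
        rw [abs_of_neg h]; linarith
    calc ((t + 1) ^ s - 1) ^ 2 ≤ |t| ^ 2 := sq_le_sq' hlb hub
    _ = |t| ^ (2:ℕ) := rfl
  have hnonneg : 0 ≤ ((t + 1) ^ s - 1) ^ 2 / |t| ^ (1 + 2 * s) :=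
    div_nonneg (sq_nonneg _) (rpow_nonneg (abs_nonneg _) _)
  rw [Real.norm_of_nonneg hnonneg]
  rcases eq_or_ne t 0 with h0 | h0
  · simp [h0]
    positivity
  · have habs : (0:ℝ) < |t| := abs_pos.mpr h0
    rw [div_le_iff₀ (rpow_pos_of_pos habs _)]
    calc ((t + 1) ^ s - 1) ^ 2 ≤ |t| ^ (2:ℕ) := hkey
      _ = |t| ^ (2:ℝ) := (rpow_natCast _ 2).symm
      _ = |t| ^ (r + (1 + 2 * s)) := by norm_num [hr]
      _ = |t| ^ r * |t| ^ (1 + 2 * s) := rpow_add habs _ _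
end

section
/- Let $0 < \sigma_1 \leq \sigma_2 < 1$, $K > 0$, and for complex $s = \sigma + i\omega$ with $\sigma_1 \leq \sigma \leq \sigma_2$, $|\omega| \leq K$, define $F_1(s) = \int_{-1}^1 \frac{((t+1)^s-1)^2}{|t|^{1+2s}}\,dt$ with $x^s := x^\sigma e^{i\omega \log x}$ for $x > 0$. Then this integral converges absolutely and uniformly on the rectangle, and $F_1$ is analytic on the open strip $0 < \mathrm{Re}(s) < 1$. -/
open MeasureTheory Real Complex Set

lemma absLogOnePlus_le {t : ℝ} (ht : |t| ≤ 1/2) : |Real.log (t+1)| ≤ 2*|t| := by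
  have h1 : -(1/2 : ℝ) ≤ t := (abs_le.1 ht).1
  have h0 : (0:ℝ) < t + 1 := by linarith
  have hu : Real.log (t+1) ≤ t := by
    have := Real.log_le_sub_one_of_pos h0; linarith
  have hl : -Real.log (t+1) ≤ (t+1)⁻¹ - 1 := by
    have := Real.log_le_sub_one_of_pos (inv_pos.2 h0)
    rwa [Real.log_inv] at this
  have h3 : (t+1)⁻¹ ≤ 1 + 2*|t| := by
    rw [inv_eq_one_div, div_le_iff₀ h0]
    nlinarith [le_abs_self t, neg_abs_le t, abs_nonneg t,
      mul_le_mul_of_nonneg_left ht (abs_nonneg t)]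
  rw [abs_le]
  constructor
  · linarith
  · have := le_abs_self t; have := abs_nonneg t; linarith

lemma cpow_sub_one_le {x : ℝ} (hx : 0 < x) {s : ℂ}
    (h : ‖s‖ * |Real.log x| ≤ 1) :
    ‖(x:ℂ)^s - 1‖ ≤ 2 * (‖s‖ * |Real.log x|) := by
  rw [Complex.cpow_def_of_ne_zero (by exact_mod_cast hx.ne' : (x:ℂ) ≠ 0)]
  rw [← Complex.ofReal_log hx.le]
  have habs : ‖((Real.log x : ℂ) * s)‖ = ‖s‖ * |Real.log x| := by
    rw [norm_mul, Complex.norm_real, Real.norm_eq_abs]; ring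
  calc ‖Complex.exp ((Real.log x : ℂ) * s) - 1‖
      = ‖(Complex.exp ((Real.log x : ℂ) * s) - 1)‖ := rfl
    _ ≤ 2 * ‖((Real.log x : ℂ) * s)‖ :=
        Complex.norm_exp_sub_one_le (by rw [habs]; exact h)
    _ = 2 * (‖s‖ * |Real.log x|) := by rw [habs]

lemma absLog_le_rpow {x ε : ℝ} (hx : 0 < x) (hx1 : x ≤ 1) (hε : 0 < ε) :
    |Real.log x| ≤ x^(-ε)/ε := by
  have hlog : Real.log x ≤ 0 := Real.log_nonpos hx.le hx1
  rw [abs_of_nonpos hlog, ← Real.log_inv]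
  calc Real.log x⁻¹ ≤ (x⁻¹)^ε / ε := Real.log_le_rpow_div (by positivity) hε
    _ = x^(-ε)/ε := by rw [Real.inv_rpow hx.le, ← Real.rpow_neg hx.le]

lemma integrableOn_abs_rpow {r : ℝ} (hr : -1 < r) :
    IntegrableOn (fun t : ℝ => |t| ^ r) (Set.Ioo (-1:ℝ) 1) := by
  have h1 : IntegrableOn (fun t : ℝ => |t| ^ r) (Set.Ioc 0 1) := by
    refine ((intervalIntegral.intervalIntegrable_rpow' hr (a := 0) (b := 1)).1).congr_fun
      (fun t ht => ?_) measurableSet_Ioc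
    rw [abs_of_pos ht.1]
  have h2 : IntegrableOn (fun t : ℝ => |t| ^ r) (Set.Ioc (-1) 0) := by
    have h3 : IntervalIntegrable (fun t : ℝ => |t| ^ r) volume 0 1 :=
      (intervalIntegrable_iff_integrableOn_Ioc_of_le (by norm_num)).2 h1
    have h4 := (IntervalIntegrable.iff_comp_neg (f := fun t : ℝ => |t| ^ r)).mp h3
    have h5 : (fun t : ℝ => |(-t)| ^ r) = (fun t : ℝ => |t| ^ r) := by
      funext t; rw [abs_neg]
    rw [h5] at h4
    simpa using h4.2
  have : Set.Ioo (-1:ℝ) 1 ⊆ Set.Ioc (-1) 0 ∪ Set.Ioc 0 1 := by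
    intro t ht; rcases le_or_gt t 0 with h | h
    · exact Or.inl ⟨ht.1, h⟩
    · exact Or.inr ⟨h, ht.2.le⟩
  exact (h2.union h1).mono_set this

lemma integrableOn_shift_rpow {r : ℝ} (hr : -1 < r) :
    IntegrableOn (fun t : ℝ => (t+1) ^ r) (Set.Ioo (-1:ℝ) 1) := by
  have h := (intervalIntegral.intervalIntegrable_rpow' hr (a := 0) (b := 2)).comp_add_right 1
  norm_num at h
  exact h.1.mono_set Set.Ioo_subset_Ioc_self

lemma norm_cpow_pos {x : ℝ} (hx : 0 < x) (s : ℂ) : ‖(x:ℂ)^s‖ = x ^ s.re :=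
  Complex.norm_cpow_eq_rpow_re_of_pos hx s

-- ‖(t+1)^s - 1‖ ≤ 3 for the given range
lemma crude_num_bound {t : ℝ} (ht : t ∈ Set.Ioo (-1:ℝ) 1) {s : ℂ} (hs1 : 0 < s.re)
    (hs2 : s.re ≤ 1) : ‖(((t + 1 : ℝ) : ℂ) ^ s - 1)‖ ≤ 3 := by
  have h0 : (0:ℝ) < t + 1 := by linarith [ht.1]
  calc ‖(((t + 1 : ℝ) : ℂ) ^ s - 1)‖ ≤ ‖(((t + 1 : ℝ) : ℂ) ^ s)‖ + 1 := by
        simpa using norm_sub_le (((t + 1 : ℝ) : ℂ) ^ s) 1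
    _ = (t+1) ^ s.re + 1 := by rw [norm_cpow_pos h0]
    _ ≤ 2 ^ (1:ℝ) + 1 := by
        have e1 : (t+1 : ℝ) ^ s.re ≤ (2:ℝ) ^ s.re :=
          Real.rpow_le_rpow (by linarith [ht.1]) (by linarith [ht.2]) (le_of_lt hs1)
        have e2 : (2:ℝ) ^ s.re ≤ (2:ℝ) ^ (1:ℝ) :=
          Real.rpow_le_rpow_of_exponent_le (by norm_num) hs2
        linarith
    _ ≤ 3 := by norm_num [Real.rpow_one]

lemma bound1 (a b M : ℝ) (ha : 0 < a) (hb : b < 1) (hab : a ≤ b) (hM : 0 < M) :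
    ∃ A : ℝ, 0 ≤ A ∧ ∀ s : ℂ, a ≤ s.re → s.re ≤ b → |s.im| ≤ M → ∀ t ∈ Set.Ioo (-1:ℝ) 1,
      ‖((((t + 1 : ℝ) : ℂ) ^ s - 1) ^ 2 / (((|t| : ℝ) : ℂ) ^ ((1 : ℂ) + 2 * s)))‖
        ≤ A * |t| ^ (1 - 2*b) := by
  obtain ⟨N, hN⟩ : ∃ x : ℝ, x = b + M := ⟨_, rfl⟩
  have hb0 : 0 < b := lt_of_lt_of_le ha hab
  have hN0 : 0 < N := by rw [hN]; positivity
  obtain ⟨δ, hδ⟩ : ∃ x : ℝ, x = min (1/2 : ℝ) (1/(4*N)) := ⟨_, rfl⟩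
  have hδ0 : 0 < δ := by rw [hδ]; exact lt_min (by norm_num) (by positivity)
  have hδhalf : δ ≤ 1/2 := by rw [hδ]; exact min_le_left _ _
  have hδN : δ ≤ 1/(4*N) := by rw [hδ]; exact min_le_right _ _
  refine ⟨16*N^2 + 9/δ^4, by positivity, ?_⟩
  intro s hsa hsb hsi t ht
  have hσa : a ≤ s.re := hsa
  have hsabs : ‖s‖ ≤ N := by
    refine le_trans (Complex.norm_le_abs_re_add_abs_im s) ?_
    rw [hN, abs_of_pos (lt_of_lt_of_le ha hsa)]; linarith
  rcases eq_or_ne t 0 with rfl | ht0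
  · have : ((0:ℝ) + 1 : ℝ) = (1:ℝ) := by norm_num
    simp only [this, Complex.ofReal_one, Complex.one_cpow, sub_self]
    norm_num
    positivity
  · have habs_t : 0 < |t| := abs_pos.2 ht0
    have h_t1 : |t| < 1 := abs_lt.2 ⟨by linarith [ht.1], ht.2⟩
    have h0 : (0:ℝ) < t + 1 := by linarith [ht.1]
    have hd : ‖((|t| : ℝ) : ℂ) ^ ((1:ℂ)+2*s)‖ = |t| ^ (1+2*s.re) := by
      rw [norm_cpow_pos habs_t]; norm_num
    have hquot : ‖((((t + 1 : ℝ) : ℂ) ^ s - 1) ^ 2 / (((|t| : ℝ) : ℂ) ^ ((1 : ℂ) + 2 * s)))‖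
        = ‖(((t + 1 : ℝ) : ℂ) ^ s - 1)‖^2 / |t| ^ (1+2*s.re) := by
      rw [norm_div, hd, norm_pow]
    have hrpow_mono : |t| ^ (1-2*s.re) ≤ |t| ^ (1-2*b) :=
      Real.rpow_le_rpow_of_exponent_ge habs_t h_t1.le (by linarith)
    rcases le_or_gt |t| δ with hle | hgt
    · -- small |t|
      have hlog : |Real.log (t+1)| ≤ 2*|t| := absLogOnePlus_le (le_trans hle hδhalf)
      have harg1 : ‖s‖ * |Real.log (t+1)| ≤ N * (2*|t|) :=
        mul_le_mul hsabs hlog (abs_nonneg _) hN0.le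
      have harg2 : N * (2*|t|) ≤ 1/2 := by
        have : N * (2*|t|) ≤ N * (2*(1/(4*N))) := by
          have h2 : |t| ≤ 1/(4*N) := le_trans hle hδN
          gcongr
        have he : N * (2*(1/(4*N))) = 1/2 := by field_simp; ring
        linarith
      have harg : ‖s‖ * |Real.log (t+1)| ≤ 1 := le_trans harg1 (by linarith)
      have hp : ‖(((t+1:ℝ)) : ℂ)^s - 1‖ ≤ 4*N*|t| := by
        have := cpow_sub_one_le h0 harg
        calc ‖(((t+1:ℝ)) : ℂ)^s - 1‖ ≤ 2 * (‖s‖ * |Real.log (t+1)|) := this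
          _ ≤ 2 * (N * (2*|t|)) := by linarith
          _ = 4*N*|t| := by ring
      have hsq : |t|^(2:ℝ) = |t|^(2:ℕ) := by rw [← Real.rpow_natCast |t| 2]; norm_num
      have key : |t|^(2:ℝ) / |t|^(1+2*s.re) = |t|^(1-2*s.re) := by
        rw [← Real.rpow_sub habs_t]; ring_nf
      calc ‖((((t + 1 : ℝ) : ℂ) ^ s - 1) ^ 2 / (((|t| : ℝ) : ℂ) ^ ((1 : ℂ) + 2 * s)))‖
          = ‖(((t + 1 : ℝ) : ℂ) ^ s - 1)‖^2 / |t| ^ (1+2*s.re) := hquot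
        _ ≤ (4*N*|t|)^2 / |t| ^ (1+2*s.re) := by gcongr
        _ = 16*N^2 * (|t|^(2:ℝ) / |t|^(1+2*s.re)) := by rw [hsq]; ring
        _ = 16*N^2 * |t|^(1-2*s.re) := by rw [key]
        _ ≤ 16*N^2 * |t|^(1-2*b) := by gcongr
        _ ≤ (16*N^2 + 9/δ^4) * |t|^(1-2*b) := by
            have : (0:ℝ) ≤ 9/δ^4 := by positivity
            have h4 : (0:ℝ) ≤ |t|^(1-2*b) := Real.rpow_nonneg habs_t.le _
            nlinarith
    · -- large |t|
      have hp3 : ‖(((t + 1 : ℝ) : ℂ) ^ s - 1)‖ ≤ 3 :=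
        crude_num_bound ht (by linarith) (by linarith)
      have hδ1 : δ ≤ 1 := by linarith
      have hden_lb : (δ^4/δ : ℝ) ≤ |t| ^ (1+2*s.re) := by
        have e0 : (δ^4/δ : ℝ) = δ^(3:ℝ) := by
          rw [show ((3:ℝ)) = ((3:ℕ):ℝ) by norm_num, Real.rpow_natCast]
          field_simp
        rw [e0]
        calc δ^(3:ℝ) ≤ δ^(1+2*s.re) :=
              Real.rpow_le_rpow_of_exponent_ge hδ0 hδ1 (by linarith)
          _ ≤ |t| ^ (1+2*s.re) := Real.rpow_le_rpow hδ0.le hgt.le (by linarith)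
      have hδt : δ ≤ |t|^(1-2*b) := by
        rcases le_or_gt 0 (1-2*b) with hbs | hbs
        · calc δ = δ^(1:ℝ) := (Real.rpow_one δ).symm
            _ ≤ δ^(1-2*b) := Real.rpow_le_rpow_of_exponent_ge hδ0 hδ1 (by linarith)
            _ ≤ |t|^(1-2*b) := Real.rpow_le_rpow hδ0.le hgt.le hbs
        · calc δ ≤ 1 := hδ1
            _ ≤ |t|^(1-2*b) :=
              Real.one_le_rpow_of_pos_of_le_one_of_nonpos habs_t h_t1.le hbs.le
      calc ‖((((t + 1 : ℝ) : ℂ) ^ s - 1) ^ 2 / (((|t| : ℝ) : ℂ) ^ ((1 : ℂ) + 2 * s)))‖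
          = ‖(((t + 1 : ℝ) : ℂ) ^ s - 1)‖^2 / |t| ^ (1+2*s.re) := hquot
        _ ≤ 9 / (δ^4/δ) := by
            apply div_le_div₀ (by norm_num) ?_ (by positivity) hden_lb
            nlinarith [norm_nonneg ((((t + 1 : ℝ) : ℂ) ^ s - 1))]
        _ = (9/δ^4) * δ := by rw [div_div_eq_mul_div, div_mul_eq_mul_div]
        _ ≤ (9/δ^4) * |t|^(1-2*b) := by gcongr
        _ ≤ (16*N^2 + 9/δ^4) * |t|^(1-2*b) := by
            have h4 : (0:ℝ) ≤ |t|^(1-2*b) := Real.rpow_nonneg habs_t.le _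
            nlinarith


noncomputable def Fd (s : ℂ) (t : ℝ) : ℂ :=
  ((2:ℂ) * (((t+1:ℝ):ℂ)^s - 1) * (((t+1:ℝ):ℂ)^s * Complex.log ((t+1:ℝ):ℂ)) * ((|t|:ℝ):ℂ)^((1:ℂ)+2*s)
   - (((t+1:ℝ):ℂ)^s - 1)^2 * (((|t|:ℝ):ℂ)^((1:ℂ)+2*s) * Complex.log ((|t|:ℝ):ℂ) * 2))
  / (((|t|:ℝ):ℂ)^((1:ℂ)+2*s))^2

lemma hasDeriv_f {t : ℝ} (ht : t ∈ Set.Ioo (-1:ℝ) 1) (ht0 : t ≠ 0) (s : ℂ) :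
    HasDerivAt (fun s : ℂ => ((((t+1:ℝ)):ℂ)^s - 1)^2 / ((|t|:ℝ):ℂ)^((1:ℂ)+2*s)) (Fd s t) s := by
  have h0 : (0:ℝ) < t + 1 := by linarith [ht.1]
  have hc1 : ((t+1:ℝ):ℂ) ≠ 0 := by exact_mod_cast h0.ne'
  have hc2 : ((|t|:ℝ):ℂ) ≠ 0 := by exact_mod_cast (abs_pos.2 ht0).ne'
  have hp : HasDerivAt (fun s : ℂ => ((t+1:ℝ):ℂ)^s)
      (((t+1:ℝ):ℂ)^s * Complex.log ((t+1:ℝ):ℂ) * 1) s :=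
    HasDerivAt.const_cpow (hasDerivAt_id s) (Or.inl hc1)
  have hu : HasDerivAt (fun s : ℂ => (((t+1:ℝ):ℂ)^s - 1)^2) _ s := (hp.sub_const 1).pow 2
  have hlin : HasDerivAt (fun s : ℂ => (1:ℂ) + 2*s) (2*1) s :=
    ((hasDerivAt_id s).const_mul 2).const_add 1
  have hv : HasDerivAt (fun s : ℂ => ((|t|:ℝ):ℂ)^((1:ℂ)+2*s))
      (((|t|:ℝ):ℂ)^((1:ℂ)+2*s) * Complex.log ((|t|:ℝ):ℂ) * (2*1)) s :=
    HasDerivAt.const_cpow hlin (Or.inl hc2)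
  have hvne : ((|t|:ℝ):ℂ)^((1:ℂ)+2*s) ≠ 0 := by
    simp [Complex.cpow_eq_zero_iff, hc2]
  have hdiv := hu.div hv hvne
  refine hdiv.congr_deriv ?_
  simp only [Fd]
  push_cast
  ring

lemma absLog_le_gen {x c : ℝ} (hx : 0 < x) (hx2 : x ≤ 2) (hc : 0 < c) :
    |Real.log x| ≤ 1 + (2/c)*x^(-(c/2)) := by
  have h3 : (0:ℝ) ≤ (2/c)*x^(-(c/2)) := by positivity
  rcases le_or_gt x 1 with h1 | h1
  · have := absLog_le_rpow hx h1 (by positivity : (0:ℝ) < c/2)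
    have h2 : x^(-(c/2))/(c/2) = (2/c)*x^(-(c/2)) := by
      rw [eq_comm, mul_comm, div_eq_mul_inv (x ^ (-(c/2)))]
      congr 1
      rw [eq_comm, inv_eq_iff_eq_inv, eq_comm, inv_div]
    rw [h2] at this
    linarith
  · have hlog : 0 ≤ Real.log x := Real.log_nonneg h1.le
    rw [_root_.abs_of_nonneg hlog]
    have h4 : Real.log x ≤ x - 1 := Real.log_le_sub_one_of_pos hx
    linarith

lemma pow_le_two {t : ℝ} (ht : t ∈ Set.Ioo (-1:ℝ) 1) {s : ℂ} (hs1 : 0 < s.re)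
    (hs2 : s.re ≤ 1) : ‖(((t + 1 : ℝ)) : ℂ) ^ s‖ ≤ 2 := by
  have h0 : (0:ℝ) < t + 1 := by linarith [ht.1]
  rw [norm_cpow_pos h0]
  have e1 : (t+1 : ℝ) ^ s.re ≤ (2:ℝ) ^ s.re :=
    Real.rpow_le_rpow (by linarith [ht.1]) (by linarith [ht.2]) (le_of_lt hs1)
  have e2 : (2:ℝ) ^ s.re ≤ (2:ℝ) ^ (1:ℝ) :=
    Real.rpow_le_rpow_of_exponent_le (by norm_num) hs2
  have : ((2:ℝ)) ^ (1:ℝ) = 2 := Real.rpow_one 2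
  linarith

set_option maxHeartbeats 1000000 in
lemma bound2 (a b M : ℝ) (ha : 0 < a) (hb : b < 1) (hab : a ≤ b) (hM : 0 < M) :
    ∃ A : ℝ, 0 ≤ A ∧ ∀ s : ℂ, a ≤ s.re → s.re ≤ b → |s.im| ≤ M → ∀ t ∈ Set.Ioo (-1:ℝ) 1,
      ‖Fd s t‖ ≤ A * (|t| ^ (1-2*b) + |t| ^ (-b) + |t| ^ (b-1) + (t+1) ^ (-(a/2)) + 1) := by
  obtain ⟨N, hN⟩ : ∃ x : ℝ, x = b + M := ⟨_, rfl⟩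
  have hb0 : 0 < b := lt_of_lt_of_le ha hab
  have hb1 : 0 < 1 - b := by linarith
  have hN0 : 0 < N := by rw [hN]; positivity
  obtain ⟨δ, hδ⟩ : ∃ x : ℝ, x = min (1/2 : ℝ) (1/(4*N)) := ⟨_, rfl⟩
  have hδ0 : 0 < δ := by rw [hδ]; exact lt_min (by norm_num) (by positivity)
  have hδhalf : δ ≤ 1/2 := by rw [hδ]; exact min_le_left _ _
  have hδN : δ ≤ 1/(4*N) := by rw [hδ]; exact min_le_right _ _
  obtain ⟨A, hA⟩ : ∃ x : ℝ, x = 32*N + 32*N^2/(1-b) + (12 + 24/a + 18/(1-b))/δ^3 := ⟨_, rfl⟩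
  have hA0 : 0 ≤ A := by rw [hA]; positivity
  have hcA1 : 32*N ≤ A := by rw [hA]; have : (0:ℝ) ≤ 32*N^2/(1-b) := by positivity
                             have : (0:ℝ) ≤ (12 + 24/a + 18/(1-b))/δ^3 := by positivity
                             linarith
  have hcA2 : 32*N^2/(1-b) ≤ A := by
    rw [hA]; have : (0:ℝ) ≤ 32*N := by positivity
    have : (0:ℝ) ≤ (12 + 24/a + 18/(1-b))/δ^3 := by positivity
    linarith
  have hcA3 : (12 + 24/a + 18/(1-b))/δ^3 ≤ A := by
    rw [hA]; have : (0:ℝ) ≤ 32*N := by positivity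
    have : (0:ℝ) ≤ 32*N^2/(1-b) := by positivity
    linarith
  refine ⟨A, hA0, ?_⟩
  intro s hsa hsb hsi t ht
  have hsabs : ‖s‖ ≤ N := by
    refine le_trans (Complex.norm_le_abs_re_add_abs_im s) ?_
    rw [hN, abs_of_pos (lt_of_lt_of_le ha hsa)]; linarith
  have hg1 : (0:ℝ) ≤ |t| ^ (1-2*b) := Real.rpow_nonneg (abs_nonneg t) _
  have hg2 : (0:ℝ) ≤ |t| ^ (-b) := Real.rpow_nonneg (abs_nonneg t) _
  have hg3 : (0:ℝ) ≤ |t| ^ (b-1) := Real.rpow_nonneg (abs_nonneg t) _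
  have h0 : (0:ℝ) < t + 1 := by linarith [ht.1]
  have hg4 : (0:ℝ) ≤ (t+1) ^ (-(a/2)) := Real.rpow_nonneg h0.le _
  have hexpand : A * (|t| ^ (1-2*b) + |t| ^ (-b) + |t| ^ (b-1) + (t+1) ^ (-(a/2)) + 1)
      = A*|t|^(1-2*b) + A*|t|^(-b) + A*|t|^(b-1) + A*(t+1)^(-(a/2)) + A := by ring
  rcases eq_or_ne t 0 with rfl | ht0
  · have e0 : ((0:ℝ) + 1 : ℝ) = (1:ℝ) := by norm_num
    have hFd0 : Fd 0 (0:ℝ) = 0 := by simp [Fd]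
    have : Fd s 0 = 0 := by
      simp only [Fd, e0, Complex.ofReal_one, Complex.one_cpow, sub_self]
      simp
    rw [this, norm_zero]
    exact mul_nonneg hA0 (by positivity)
  · have habs_t : 0 < |t| := abs_pos.2 ht0
    have h_t1 : |t| < 1 := abs_lt.2 ⟨by linarith [ht.1], ht.2⟩
    have hd : ‖((|t| : ℝ) : ℂ) ^ ((1:ℂ)+2*s)‖ = |t| ^ (1+2*s.re) := by
      rw [norm_cpow_pos habs_t]; norm_num
    have hdpos : 0 < |t| ^ (1+2*s.re) := Real.rpow_pos_of_pos habs_t _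
    have hl1 : ‖Complex.log (((t+1:ℝ)) : ℂ)‖ = |Real.log (t+1)| := by
      rw [← Complex.ofReal_log h0.le]; exact (Complex.norm_real _).trans (Real.norm_eq_abs _)
    have hl2 : ‖Complex.log ((|t| : ℝ) : ℂ)‖ = |Real.log (|t|)| := by
      rw [← Complex.ofReal_log habs_t.le]; exact (Complex.norm_real _).trans (Real.norm_eq_abs _)
    have key : ‖Fd s t‖ ≤ (2*‖(((t+1:ℝ)):ℂ)^s - 1‖*‖(((t+1:ℝ)):ℂ)^s‖*|Real.log (t+1)|
        + 2*‖(((t+1:ℝ)):ℂ)^s - 1‖^2*|Real.log (|t|)|) / |t|^(1+2*s.re) := by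
      simp only [Fd]
      rw [norm_div, norm_pow, hd]
      have hT := norm_sub_le
        ((2:ℂ) * ((((t+1:ℝ)):ℂ)^s - 1) * ((((t+1:ℝ)):ℂ)^s * Complex.log (((t+1:ℝ)):ℂ))
          * ((|t|:ℝ):ℂ)^((1:ℂ)+2*s))
        (((((t+1:ℝ)):ℂ)^s - 1)^2 * (((|t|:ℝ):ℂ)^((1:ℂ)+2*s) * Complex.log ((|t|:ℝ):ℂ) * 2))
      have e1 : ‖(2:ℂ) * ((((t+1:ℝ)):ℂ)^s - 1) * ((((t+1:ℝ)):ℂ)^s * Complex.log (((t+1:ℝ)):ℂ))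
          * ((|t|:ℝ):ℂ)^((1:ℂ)+2*s)‖
          = 2*‖(((t+1:ℝ)):ℂ)^s - 1‖*‖(((t+1:ℝ)):ℂ)^s‖*|Real.log (t+1)| * (|t|^(1+2*s.re)) := by
        simp only [norm_mul]
        rw [hd, hl1]
        norm_num
        ring_nf
        tauto
      have e2 : ‖((((t+1:ℝ)):ℂ)^s - 1)^2 * (((|t|:ℝ):ℂ)^((1:ℂ)+2*s) * Complex.log ((|t|:ℝ):ℂ) * 2)‖
          = ‖(((t+1:ℝ)):ℂ)^s - 1‖^2*((|t|^(1+2*s.re))*|Real.log (|t|)| *2) := by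
        simp only [norm_mul, norm_pow]
        rw [hd, hl2]
        norm_num
      rw [e1, e2] at hT
      calc _ ≤ (2*‖(((t+1:ℝ)):ℂ)^s - 1‖*‖(((t+1:ℝ)):ℂ)^s‖*|Real.log (t+1)| * (|t|^(1+2*s.re))
            + ‖(((t+1:ℝ)):ℂ)^s - 1‖^2*((|t|^(1+2*s.re))*|Real.log (|t|)| *2)) / (|t|^(1+2*s.re))^2 := by
            gcongr
        _ = _ := by field_simp
    rcases le_or_gt |t| δ with hle | hgt
    · -- small |t|
      have hlog : |Real.log (t+1)| ≤ 2*|t| := absLogOnePlus_le (le_trans hle hδhalf)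
      have harg1 : ‖s‖ * |Real.log (t+1)| ≤ N * (2*|t|) :=
        mul_le_mul hsabs hlog (abs_nonneg _) hN0.le
      have harg2 : N * (2*|t|) ≤ 1/2 := by
        have h5 : N * (2*|t|) ≤ N * (2*(1/(4*N))) := by
          have h2 : |t| ≤ 1/(4*N) := le_trans hle hδN
          gcongr
        have he : N * (2*(1/(4*N))) = 1/2 := by field_simp; ring
        linarith
      have harg : ‖s‖ * |Real.log (t+1)| ≤ 1 := le_trans harg1 (by linarith)
      have hp : ‖(((t+1:ℝ)) : ℂ)^s - 1‖ ≤ 4*N*|t| := by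
        have h6 := cpow_sub_one_le h0 harg
        calc ‖(((t+1:ℝ)) : ℂ)^s - 1‖ ≤ 2 * (‖s‖ * |Real.log (t+1)|) := h6
          _ ≤ 2 * (N * (2*|t|)) := by linarith
          _ = 4*N*|t| := by ring
      have hP : ‖(((t+1:ℝ)) : ℂ)^s‖ ≤ 2 := pow_le_two ht (by linarith) (by linarith)
      have hL2 : |Real.log (|t|)| ≤ |t|^(b-1)/(1-b) := by
        have h7 := absLog_le_rpow habs_t h_t1.le hb1
        rwa [show -(1-b) = b-1 by ring] at h7
      have hX : 2*‖(((t+1:ℝ)):ℂ)^s - 1‖*‖(((t+1:ℝ)):ℂ)^s‖*|Real.log (t+1)|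
          + 2*‖(((t+1:ℝ)):ℂ)^s - 1‖^2*|Real.log (|t|)|
          ≤ 32*N*(t^2) + (32*N^2/(1-b))*((t^2) * |t|^(b-1)) := by
        have t1 : 2*‖(((t+1:ℝ)):ℂ)^s - 1‖*‖(((t+1:ℝ)):ℂ)^s‖*|Real.log (t+1)|
            ≤ 2*(4*N*|t|)*2*(2*|t|) := by gcongr <;> positivity
        have t2 : 2*‖(((t+1:ℝ)):ℂ)^s - 1‖^2*|Real.log (|t|)|
            ≤ 2*(4*N*|t|)^2*(|t|^(b-1)/(1-b)) := by gcongr <;> positivity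
        calc _ ≤ 2*(4*N*|t|)*2*(2*|t|) + 2*(4*N*|t|)^2*(|t|^(b-1)/(1-b)) := add_le_add t1 t2
          _ = 32*N*(t^2) + (32*N^2/(1-b))*((t^2) * |t|^(b-1)) := by
              field_simp
              rw [← _root_.sq_abs t]
              ring
      have h2r : |t|^(2:ℝ) = t^2 := by
        rw [show ((2:ℝ)) = ((2:ℕ):ℝ) by norm_num, Real.rpow_natCast]
        exact sq_abs t
      have e3 : (t^2)/(|t|^(1+2*s.re)) = |t|^(1-2*s.re) := by
        rw [← h2r, ← Real.rpow_sub habs_t]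
        norm_num
        congr 1
        ring
      have e4 : ((t^2) * |t|^(b-1))/(|t|^(1+2*s.re)) = |t|^(b-2*s.re) := by
        rw [← h2r, ← Real.rpow_add habs_t, ← Real.rpow_sub habs_t]
        congr 1
        ring
      have mono3 : |t|^(1-2*s.re) ≤ |t|^(1-2*b) :=
        Real.rpow_le_rpow_of_exponent_ge habs_t h_t1.le (by linarith)
      have mono4 : |t|^(b-2*s.re) ≤ |t|^(-b) :=
        Real.rpow_le_rpow_of_exponent_ge habs_t h_t1.le (by linarith)
      calc ‖Fd s t‖ ≤ _ := key
        _ ≤ (32*N*(t^2) + (32*N^2/(1-b))*((t^2) * |t|^(b-1))) / (|t|^(1+2*s.re)) := by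
            gcongr
        _ = 32*N*((t^2)/(|t|^(1+2*s.re)))
            + (32*N^2/(1-b))*(((t^2) * |t|^(b-1))/(|t|^(1+2*s.re))) := by ring
        _ = 32*N*|t|^(1-2*s.re) + (32*N^2/(1-b)) * |t|^(b-2*s.re) := by rw [e3, e4]
        _ ≤ A*|t|^(1-2*b) + A*|t|^(-b) := by
            have f1 : 32*N*|t|^(1-2*s.re) ≤ A*|t|^(1-2*b) := by
              calc 32*N*|t|^(1-2*s.re) ≤ 32*N*|t|^(1-2*b) :=
                    mul_le_mul_of_nonneg_left mono3 (by positivity)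
                _ ≤ A*|t|^(1-2*b) := mul_le_mul_of_nonneg_right hcA1 hg1
            have f2 : (32*N^2/(1-b)) * |t|^(b-2*s.re) ≤ A*|t|^(-b) := by
              calc (32*N^2/(1-b)) * |t|^(b-2*s.re) ≤ (32*N^2/(1-b)) * |t|^(-b) :=
                    mul_le_mul_of_nonneg_left mono4 (by positivity)
                _ ≤ A*|t|^(-b) := mul_le_mul_of_nonneg_right hcA2 hg2
            linarith
        _ ≤ A * (|t| ^ (1-2*b) + |t| ^ (-b) + |t| ^ (b-1) + (t+1) ^ (-(a/2)) + 1) := by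
            rw [hexpand]
            linarith [mul_nonneg hA0 hg3, mul_nonneg hA0 hg4, hA0]
    · -- large |t|
      have hP1 : ‖(((t + 1 : ℝ)) : ℂ) ^ s - 1‖ ≤ 3 :=
        crude_num_bound ht (by linarith) (by linarith)
      have hP : ‖(((t+1:ℝ)) : ℂ)^s‖ ≤ 2 := pow_le_two ht (by linarith) (by linarith)
      have hL1g : |Real.log (t+1)| ≤ 1 + (2/a)*(t+1)^(-(a/2)) :=
        absLog_le_gen h0 (by linarith [ht.2]) ha
      have hL2 : |Real.log (|t|)| ≤ |t|^(b-1)/(1-b) := by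
        have h7 := absLog_le_rpow habs_t h_t1.le hb1
        rwa [show -(1-b) = b-1 by ring] at h7
      have hδ1 : δ ≤ 1 := by linarith
      have hden : (δ^3:ℝ) ≤ |t| ^ (1+2*s.re) := by
        have e0 : (δ^3 : ℝ) = δ^(3:ℝ) := by
          rw [show ((3:ℝ)) = ((3:ℕ):ℝ) by norm_num, Real.rpow_natCast]
        rw [e0]
        calc δ^(3:ℝ) ≤ δ^(1+2*s.re) :=
              Real.rpow_le_rpow_of_exponent_ge hδ0 hδ1 (by linarith)
          _ ≤ |t| ^ (1+2*s.re) := Real.rpow_le_rpow hδ0.le hgt.le (by linarith)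
      have hX : 2*‖(((t+1:ℝ)):ℂ)^s - 1‖*‖(((t+1:ℝ)):ℂ)^s‖*|Real.log (t+1)|
          + 2*‖(((t+1:ℝ)):ℂ)^s - 1‖^2*|Real.log (|t|)|
          ≤ 12*|Real.log (t+1)| + 18*|Real.log (|t|)| := by
        have t1 : 2*‖(((t+1:ℝ)):ℂ)^s - 1‖*‖(((t+1:ℝ)):ℂ)^s‖*|Real.log (t+1)|
            ≤ 2*3*2*|Real.log (t+1)| := by gcongr <;> positivity
        have t2 : 2*‖(((t+1:ℝ)):ℂ)^s - 1‖^2*|Real.log (|t|)|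
            ≤ 2*3^2*|Real.log (|t|)| := by gcongr <;> positivity
        calc _ ≤ 2*3*2*|Real.log (t+1)| + 2*3^2*|Real.log (|t|)| := add_le_add t1 t2
          _ = 12*|Real.log (t+1)| + 18*|Real.log (|t|)| := by ring
      have hXnn : (0:ℝ) ≤ 12*|Real.log (t+1)| + 18*|Real.log (|t|)| := by positivity
      have c1 : 12/δ^3 ≤ A := by
        refine le_trans ?_ hcA3
        gcongr
        · have : (0:ℝ) ≤ 24/a := by positivity
          have : (0:ℝ) ≤ 18/(1-b) := by positivity
          linarith
      have c2 : (24/a)/δ^3 ≤ A := by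
        refine le_trans ?_ hcA3
        gcongr
        · have : (0:ℝ) ≤ 18/(1-b) := by positivity
          linarith
      have c3 : (18/(1-b))/δ^3 ≤ A := by
        refine le_trans ?_ hcA3
        gcongr
        · have : (0:ℝ) ≤ 24/a := by positivity
          linarith
      calc ‖Fd s t‖ ≤ _ := key
        _ ≤ (12*|Real.log (t+1)| + 18*|Real.log (|t|)|)/(δ^3) :=
            div_le_div₀ hXnn hX (by positivity) hden
        _ ≤ (12*(1 + (2/a)*(t+1)^(-(a/2))) + 18*(|t|^(b-1)/(1-b)))/(δ^3) := by gcongr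
        _ = (12/δ^3)*1 + ((24/a)/δ^3)*(t+1)^(-(a/2)) + ((18/(1-b))/δ^3) * |t|^(b-1) := by
            field_simp
            ring
        _ ≤ A*1 + A*(t+1)^(-(a/2)) + A*|t|^(b-1) := by
            have f1 := mul_le_mul_of_nonneg_right c1 (by norm_num : (0:ℝ) ≤ 1)
            have f2 := mul_le_mul_of_nonneg_right c2 hg4
            have f3 := mul_le_mul_of_nonneg_right c3 hg3
            linarith
        _ ≤ A * (|t| ^ (1-2*b) + |t| ^ (-b) + |t| ^ (b-1) + (t+1) ^ (-(a/2)) + 1) := by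
            rw [hexpand]
            linarith [mul_nonneg hA0 hg1, mul_nonneg hA0 hg2, hA0]

lemma meas_f (s : ℂ) : Measurable (fun t : ℝ =>
    ((((t + 1 : ℝ) : ℂ) ^ s - 1) ^ 2 / (((|t| : ℝ) : ℂ) ^ ((1 : ℂ) + 2 * s)))) := by fun_prop

lemma meas_Fd (s : ℂ) : Measurable (Fd s) := by
  have m1 : Measurable (fun t : ℝ => ((t+1:ℝ):ℂ)^s) := by fun_prop
  have m2 : Measurable (fun t : ℝ => ((|t|:ℝ):ℂ)^((1:ℂ)+2*s)) := by fun_prop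
  have mlog1 : Measurable (fun t : ℝ => Complex.log ((t+1:ℝ):ℂ)) :=
    Complex.measurable_log.comp (by fun_prop)
  have mlog2 : Measurable (fun t : ℝ => Complex.log ((|t|:ℝ):ℂ)) :=
    Complex.measurable_log.comp (by fun_prop)
  exact ((((measurable_const.mul (m1.sub measurable_const)).mul (m1.mul mlog1)).mul m2).sub
    (((m1.sub measurable_const).pow_const 2).mul ((m2.mul mlog2).mul measurable_const))).div
    (m2.pow_const 2)

lemma int_f {a b M : ℝ} (ha : 0 < a) (hb : b < 1) (hab : a ≤ b) (hM : 0 < M)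
    {s : ℂ} (h1 : a ≤ s.re) (h2 : s.re ≤ b) (h3 : |s.im| ≤ M) :
    IntegrableOn (fun t : ℝ =>
      (((t + 1 : ℝ) : ℂ) ^ s - 1) ^ 2 / (((|t| : ℝ) : ℂ) ^ ((1 : ℂ) + 2 * s)))
      (Set.Ioo (-1:ℝ) 1) := by
  obtain ⟨A, hA0, hA⟩ := bound1 a b M ha hb hab hM
  have hg : IntegrableOn (fun t : ℝ => A * |t| ^ (1-2*b)) (Set.Ioo (-1:ℝ) 1) :=
    (integrableOn_abs_rpow (by linarith)).const_mul A
  refine Integrable.mono' hg (meas_f s).aestronglyMeasurable ?_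
  exact (ae_restrict_mem measurableSet_Ioo).mono (fun t ht => hA s h1 h2 h3 t ht)

lemma g2_int {a b : ℝ} (ha : 0 < a) (ha2 : a < 2) (hb0 : 0 < b) (hb : b < 1) :
    IntegrableOn (fun t : ℝ =>
      |t| ^ (1-2*b) + |t| ^ (-b) + |t| ^ (b-1) + (t+1) ^ (-(a/2)) + 1)
      (Set.Ioo (-1:ℝ) 1) := by
  have i1 := integrableOn_abs_rpow (by linarith : (-1:ℝ) < 1-2*b)
  have i2 := integrableOn_abs_rpow (by linarith : (-1:ℝ) < -b)
  have i3 := integrableOn_abs_rpow (by linarith : (-1:ℝ) < b-1)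
  have i4 := integrableOn_shift_rpow (by linarith : (-1:ℝ) < -(a/2))
  have i5 : IntegrableOn (fun _ : ℝ => (1:ℝ)) (Set.Ioo (-1:ℝ) 1) :=
    integrableOn_const measure_Ioo_lt_top.ne
  exact (((i1.add i2).add i3).add i4).add i5

theorem stmt9 (σ1 σ2 K : ℝ) (h1 : 0 < σ1) (h12 : σ1 ≤ σ2) (h2 : σ2 < 1) (hK : 0 < K) :
    (∃ C : ℝ, ∀ s : ℂ, σ1 ≤ s.re → s.re ≤ σ2 → |s.im| ≤ K →
      IntegrableOn (fun t : ℝ =>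
          ‖((((t + 1 : ℝ) : ℂ) ^ s - 1) ^ 2 / (((|t| : ℝ) : ℂ) ^ ((1 : ℂ) + 2 * s)))‖)
        (Set.Ioo (-1 : ℝ) 1) ∧
      (∫ t in Set.Ioo (-1 : ℝ) 1,
          ‖((((t + 1 : ℝ) : ℂ) ^ s - 1) ^ 2 / (((|t| : ℝ) : ℂ) ^ ((1 : ℂ) + 2 * s)))‖) ≤ C) ∧
    AnalyticOn ℂ (fun s : ℂ => ∫ t in Set.Ioo (-1 : ℝ) 1,
        (((t + 1 : ℝ) : ℂ) ^ s - 1) ^ 2 / (((|t| : ℝ) : ℂ) ^ ((1 : ℂ) + 2 * s)))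
      {s : ℂ | 0 < s.re ∧ s.re < 1} := by
  constructor
  · -- Part 1
    obtain ⟨A, hA0, hA⟩ := bound1 σ1 σ2 K h1 h2 h12 hK
    have hg : IntegrableOn (fun t : ℝ => A * |t| ^ (1-2*σ2)) (Set.Ioo (-1:ℝ) 1) :=
      (integrableOn_abs_rpow (by linarith)).const_mul A
    refine ⟨∫ t in Set.Ioo (-1:ℝ) 1, A * |t| ^ (1-2*σ2), fun s hs1 hs2 hs3 => ?_⟩
    have hint := int_f h1 h2 h12 hK hs1 hs2 hs3
    refine ⟨hint.norm, ?_⟩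
    exact setIntegral_mono_on hint.norm hg measurableSet_Ioo (fun t ht => hA s hs1 hs2 hs3 t ht)
  · -- Part 2
    have hopen : IsOpen {s : ℂ | 0 < s.re ∧ s.re < 1} := by
      have he : {s : ℂ | 0 < s.re ∧ s.re < 1} = Complex.re ⁻¹' (Set.Ioo 0 1) := rfl
      rw [he]; exact isOpen_Ioo.preimage Complex.continuous_re
    refine DifferentiableOn.analyticOn ?_ hopen
    intro s0 hs0
    obtain ⟨hs01, hs02⟩ := hs0
    apply DifferentiableAt.differentiableWithinAt
    obtain ⟨a, hadef⟩ : ∃ x:ℝ, x = s0.re/2 := ⟨_, rfl⟩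
    obtain ⟨b, hbdef⟩ : ∃ x:ℝ, x = (s0.re+1)/2 := ⟨_, rfl⟩
    obtain ⟨ε, hεdef⟩ : ∃ x:ℝ, x = min (s0.re/2) ((1-s0.re)/2) := ⟨_, rfl⟩
    obtain ⟨M, hMdef⟩ : ∃ x:ℝ, x = |s0.im| + 1 := ⟨_, rfl⟩
    have ha : 0 < a := by rw [hadef]; linarith
    have hb : b < 1 := by rw [hbdef]; linarith
    have hab : a ≤ b := by rw [hadef, hbdef]; linarith
    have hM : 0 < M := by rw [hMdef]; positivity
    have hε : 0 < ε := by rw [hεdef]; exact lt_min (by linarith) (by linarith)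
    have hε1 : ε ≤ s0.re/2 := by rw [hεdef]; exact min_le_left _ _
    have hε2 : ε ≤ (1-s0.re)/2 := by rw [hεdef]; exact min_le_right _ _
    have hball : ∀ s ∈ Metric.ball s0 ε, a ≤ s.re ∧ s.re ≤ b ∧ |s.im| ≤ M := by
      intro s hs
      rw [Metric.mem_ball, Complex.dist_eq] at hs
      have hre : |s.re - s0.re| ≤ ‖s - s0‖ := by
        simpa [Complex.sub_re] using Complex.abs_re_le_norm (s - s0)
      have him : |s.im - s0.im| ≤ ‖s - s0‖ := by
        simpa [Complex.sub_im] using Complex.abs_im_le_norm (s - s0)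
      have hre1 := abs_le.1 hre
      have him1 := abs_le.1 him
      refine ⟨by rw [hadef]; linarith [hre1.1], by rw [hbdef]; linarith [hre1.2], ?_⟩
      have : |s.im| ≤ |s0.im| + |s.im - s0.im| := by
        calc |s.im| = |s0.im + (s.im - s0.im)| := by ring_nf
          _ ≤ |s0.im| + |s.im - s0.im| := abs_add_le _ _
      rw [hMdef]
      linarith [him1.1, him1.2, abs_le.1 (le_refl |s.im - s0.im|)]
    obtain ⟨A2, hA20, hA2⟩ := bound2 a b M ha hb hab hM
    have hs0a : a ≤ s0.re := by rw [hadef]; linarith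
    have hs0b : s0.re ≤ b := by rw [hbdef]; linarith
    have hs0M : |s0.im| ≤ M := by rw [hMdef]; linarith
    have hne : ∀ᵐ t : ℝ ∂(volume.restrict (Set.Ioo (-1:ℝ) 1)), t ≠ 0 := by
      refine ae_restrict_of_ae ?_
      refine ae_iff.mpr ?_
      simp only [ne_eq, not_not, Set.setOf_eq_eq_singleton]
      exact measure_singleton 0
    have key := hasDerivAt_integral_of_dominated_loc_of_deriv_le
      (F := fun (z:ℂ) (t:ℝ) =>
        (((t + 1 : ℝ) : ℂ) ^ z - 1) ^ 2 / (((|t| : ℝ) : ℂ) ^ ((1 : ℂ) + 2 * z)))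
      (F' := Fd) (x₀ := s0)
      (μ := volume.restrict (Set.Ioo (-1:ℝ) 1))
      (bound := fun t => A2 * (|t| ^ (1-2*b) + |t| ^ (-b) + |t| ^ (b-1) + (t+1) ^ (-(a/2)) + 1))
      (Metric.ball_mem_nhds s0 hε)
      (Filter.Eventually.of_forall (fun s => (meas_f s).aestronglyMeasurable))
      (int_f ha hb hab hM hs0a hs0b hs0M)
      ((meas_Fd s0).aestronglyMeasurable)
      ((ae_restrict_mem measurableSet_Ioo).mono (fun t ht x hx =>
        hA2 x (hball x hx).1 (hball x hx).2.1 (hball x hx).2.2 t ht))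
      ((g2_int ha (by linarith) (lt_of_lt_of_le ha hab) hb).const_mul A2)
      (((ae_restrict_mem measurableSet_Ioo).and hne).mono (fun t htt x _ =>
        hasDeriv_f htt.1 htt.2 x))
    exact key.2.differentiableAt
end

section
/- Let $f$ be locally Lipschitz, $\rho > 0$ with $f(\rho) = 0$, and suppose $F(t) < F(\rho)$ for all $t \in [0,\rho)$ where $F(t) = \int_0^t f$. If $f(0) < 0$, then there exists $\delta_0 > 0$ such that for all $\delta \in (0, \delta_0)$ the function $g_\delta(t) := f_\delta(t - \delta)$, where $f_\delta(t) = \frac{f(0)}{\delta}(t+\delta)$ for $t \in [-\delta, 0)$ and $f_\delta(t) = f(t)$ for $t \in [0,\rho]$, is locally Lipschitz on $[0, \rho+\delta]$, satisfies $g_\delta(\rho+\delta) = 0$, and its primitive $G_\delta(t) = \int_0^t g_\delta$ satisfies $G_\delta(t) < G_\delta(\rho+\delta)$ for all $t \in [0, \rho+\delta)$. -/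
open MeasureTheory Real Set


lemma locLip_compact {f : ℝ → ℝ} (hf : LocallyLipschitz f) {s : Set ℝ} (hs : IsCompact s) :
    ∃ K : NNReal, LipschitzOnWith K f s := by
  have hfc : Continuous f := hf.continuous
  choose K t ht hlip using hf
  have hball : ∀ x : ℝ, ∃ r > 0, Metric.ball x r ⊆ t x := fun x => Metric.mem_nhds_iff.mp (ht x)
  choose r hr hbs using hball
  obtain ⟨I, hI⟩ := hs.elim_finite_subcover (fun x => Metric.ball x (r x))
    (fun x => Metric.isOpen_ball) (fun x hx => Set.mem_iUnion.2 ⟨x, Metric.mem_ball_self (hr x)⟩)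
  have hI' : s ⊆ ⋃ i : I, Metric.ball (i : ℝ) (r i) := by
    intro x hx
    obtain ⟨i, hi⟩ := Set.mem_iUnion₂.1 (hI hx)
    exact Set.mem_iUnion.2 ⟨⟨i, hi.1⟩, hi.2⟩
  obtain ⟨δ, hδ, hcov⟩ := lebesgue_number_lemma_of_metric hs
    (fun i : I => Metric.isOpen_ball) hI'
  obtain ⟨M, hM⟩ := hs.exists_bound_of_continuousOn hfc.continuousOn
  set Km : NNReal := I.sup K with hKm
  set C : ℝ := max (Km : ℝ) (2 * max M 0 / δ) with hC
  have hC0 : 0 ≤ C := le_max_of_le_left Km.coe_nonneg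
  refine ⟨C.toNNReal, LipschitzOnWith.of_dist_le_mul fun x hx y hy => ?_⟩
  rw [Real.coe_toNNReal _ hC0]
  rcases lt_or_ge (dist x y) δ with hlt | hge
  · obtain ⟨i, hib⟩ := hcov x hx
    have hxy : y ∈ Metric.ball (i : ℝ) (r i) := hib (by simpa [Metric.mem_ball, dist_comm] using hlt)
    have hxx : x ∈ Metric.ball (i : ℝ) (r i) := hib (Metric.mem_ball_self hδ)
    have := (hlip i).mono (hbs (i : ℝ))
    have hd := this.dist_le_mul x hxx y hxy
    have hKi : (K (i : ℝ) : ℝ) ≤ C :=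
      le_max_of_le_left (by exact_mod_cast Finset.le_sup i.2)
    calc dist (f x) (f y) ≤ (K (i:ℝ) : ℝ) * dist x y := hd
      _ ≤ C * dist x y := by nlinarith [dist_nonneg (x := x) (y := y)]
  · have h1 : dist (f x) (f y) ≤ 2 * max M 0 := by
      rw [Real.dist_eq]
      have h : |f x - f y| ≤ |f x| + |f y| := abs_sub _ _
      have hx' : |f x| ≤ max M 0 := le_max_of_le_left (by simpa [Real.norm_eq_abs] using hM x hx)
      have hy' : |f y| ≤ max M 0 := le_max_of_le_left (by simpa [Real.norm_eq_abs] using hM y hy)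
      linarith
    have h2 : 2 * max M 0 / δ ≤ C := le_max_right _ _
    have h3 : 2 * max M 0 / δ * δ ≤ C * dist x y := by
      have hm0 : 0 ≤ 2 * max M 0 / δ := by positivity
      calc 2 * max M 0 / δ * δ ≤ C * δ := by nlinarith
        _ ≤ C * dist x y := by nlinarith
    calc dist (f x) (f y) ≤ 2 * max M 0 := h1
      _ = 2 * max M 0 / δ * δ := by field_simp
      _ ≤ C * dist x y := h3
open MeasureTheory Real Set

theorem stmt18 (f : ℝ → ℝ) (hf : LocallyLipschitz f) (ρ : ℝ) (hρ : 0 < ρ)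
    (hfρ : f ρ = 0)
    (hF : ∀ t ∈ Set.Ico (0:ℝ) ρ, (∫ τ in (0:ℝ)..t, f τ) < ∫ τ in (0:ℝ)..ρ, f τ)
    (hf0 : f 0 < 0) :
    ∃ δ0 > (0:ℝ), ∀ δ ∈ Set.Ioo (0:ℝ) δ0, ∀ g : ℝ → ℝ,
      (∀ t, g t = if t < δ then f 0 / δ * t else f (t - δ)) →
      (∃ L : NNReal, LipschitzOnWith L g (Set.Icc 0 (ρ + δ))) ∧
      g (ρ + δ) = 0 ∧
      ∀ t ∈ Set.Ico (0:ℝ) (ρ + δ),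
        (∫ τ in (0:ℝ)..t, g τ) < ∫ τ in (0:ℝ)..(ρ + δ), g τ := by
  set Fρ : ℝ := ∫ τ in (0:ℝ)..ρ, f τ with hFρ
  have hFρ0 : 0 < Fρ := by
    have := hF 0 ⟨le_refl 0, hρ⟩
    simpa using this
  refine ⟨Fρ / (-(f 0)), div_pos hFρ0 (by linarith), ?_⟩
  rintro δ ⟨hδ0, hδ1⟩ g hg
  have hδFρ : δ * (-(f 0)) < Fρ := (lt_div_iff₀ (by linarith)).1 hδ1
  obtain ⟨K, hK⟩ := locLip_compact hf (isCompact_Icc (a := (0:ℝ)) (b := ρ))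
  -- values of g
  have hglin : ∀ u, u ≤ δ → g u = f 0 / δ * u := by
    intro u hu
    rcases lt_or_eq_of_le hu with h | h
    · rw [hg u, if_pos h]
    · rw [hg u, if_neg (by simp [h]), h]
      field_simp
      simp
  have hgright : ∀ u, δ ≤ u → g u = f (u - δ) := fun u hu => by
    rw [hg u, if_neg (not_lt.2 hu)]
  -- Lipschitz
  set Lr : ℝ := max (K : ℝ) (|f 0| / δ) with hLr
  have hLr0 : 0 ≤ Lr := le_max_of_le_left K.coe_nonneg
  have key : ∀ x ∈ Icc (0:ℝ) (ρ + δ), ∀ y ∈ Icc (0:ℝ) (ρ + δ), x ≤ y →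
      |g x - g y| ≤ Lr * |x - y| := by
    intro x hx y hy hxy
    have hlin : ∀ u v : ℝ, 0 ≤ u → u ≤ δ → 0 ≤ v → v ≤ δ → |g u - g v| ≤ Lr * |u - v| := by
      intro u v hu1 hu2 hv1 hv2
      rw [hglin u hu2, hglin v hv2, ← mul_sub, abs_mul, abs_div]
      have h1 : |f 0| / |δ| = |f 0| / δ := by rw [abs_of_pos hδ0]
      rw [h1]
      have : |f 0| / δ ≤ Lr := le_max_right _ _
      nlinarith [abs_nonneg (u - v), abs_nonneg (f 0)]
    have hrt : ∀ u v : ℝ, δ ≤ u → u ≤ ρ + δ → δ ≤ v → v ≤ ρ + δ → |g u - g v| ≤ Lr * |u - v| := by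
      intro u v hu1 hu2 hv1 hv2
      rw [hgright u hu1, hgright v hv1]
      have hd := hK.dist_le_mul (u - δ) ⟨by linarith, by linarith⟩ (v - δ) ⟨by linarith, by linarith⟩
      rw [Real.dist_eq, Real.dist_eq] at hd
      have he : u - δ - (v - δ) = u - v := by ring
      rw [he] at hd
      have : (K : ℝ) ≤ Lr := le_max_left _ _
      nlinarith [abs_nonneg (u - v)]
    rcases le_or_gt y δ with hyδ | hyδ
    · exact hlin x y hx.1 (le_trans hxy hyδ) hy.1 hyδ
    rcases le_or_gt δ x with hxδ | hxδ
    · exact hrt x y hxδ hx.2 (le_of_lt hyδ) hy.2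
    · have h1 := hlin x δ hx.1 (le_of_lt hxδ) (le_of_lt hδ0) le_rfl
      have h2 := hrt δ y le_rfl (by linarith) (le_of_lt hyδ) hy.2
      have ht := abs_sub_le (g x) (g δ) (g y)
      have e1 : |x - δ| = δ - x := by rw [abs_of_nonpos (by linarith)]; ring
      have e2 : |δ - y| = y - δ := by rw [abs_of_nonpos (by linarith)]; ring
      have e3 : |x - y| = y - x := by rw [abs_of_nonpos (by linarith)]; ring
      rw [e1] at h1; rw [e2] at h2; rw [e3]
      nlinarith
  have hLip : LipschitzOnWith Lr.toNNReal g (Icc 0 (ρ + δ)) := by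
    refine LipschitzOnWith.of_dist_le_mul fun x hx y hy => ?_
    rw [Real.coe_toNNReal _ hLr0, Real.dist_eq, Real.dist_eq]
    rcases le_total x y with h | h
    · exact key x hx y hy h
    · rw [abs_sub_comm (g x), abs_sub_comm x]
      exact key y hy x hx h
  refine ⟨⟨Lr.toNNReal, hLip⟩, ?_, ?_⟩
  · rw [hgright (ρ + δ) (by linarith), add_sub_cancel_right, hfρ]
  -- integrals
  have hgc : ContinuousOn g (Icc 0 (ρ + δ)) := hLip.continuousOn
  have hint : ∀ a b : ℝ, 0 ≤ a → b ≤ ρ + δ → a ≤ b → IntervalIntegrable g volume a b := by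
    intro a b ha hb hab
    exact (hgc.mono (by rw [uIcc_of_le hab]; exact Icc_subset_Icc ha hb)).intervalIntegrable
  have I1 : (∫ τ in (0:ℝ)..δ, g τ) = f 0 * δ / 2 := by
    rw [intervalIntegral.integral_congr (g := fun τ => f 0 / δ * τ)
      (by intro τ hτ; rw [uIcc_of_le (le_of_lt hδ0)] at hτ; exact hglin τ hτ.2)]
    rw [intervalIntegral.integral_const_mul, integral_id]
    field_simp
    ring
  have I2 : ∀ t : ℝ, δ ≤ t → t ≤ ρ + δ →
      (∫ τ in (0:ℝ)..t, g τ) = f 0 * δ / 2 + ∫ τ in (0:ℝ)..(t - δ), f τ := by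
    intro t ht1 ht2
    rw [← intervalIntegral.integral_add_adjacent_intervals
      (hint 0 δ le_rfl (by linarith) (le_of_lt hδ0)) (hint δ t (le_of_lt hδ0) ht2 ht1), I1]
    congr 1
    rw [intervalIntegral.integral_congr (g := fun τ => f (τ - δ))
      (by intro τ hτ; rw [uIcc_of_le ht1] at hτ; exact hgright τ hτ.1)]
    rw [intervalIntegral.integral_comp_sub_right f δ, sub_self]
  have Itot : (∫ τ in (0:ℝ)..(ρ + δ), g τ) = f 0 * δ / 2 + Fρ := by
    rw [I2 (ρ + δ) (by linarith) le_rfl, add_sub_cancel_right]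
  intro t ⟨ht0, ht1⟩
  rw [Itot]
  rcases le_or_gt δ t with hδt | hδt
  · rw [I2 t hδt (le_of_lt ht1)]
    have := hF (t - δ) ⟨by linarith, by linarith⟩
    linarith
  · have It : (∫ τ in (0:ℝ)..t, g τ) = f 0 / δ * (t ^ 2 / 2) := by
      rw [intervalIntegral.integral_congr (g := fun τ => f 0 / δ * τ)
        (by intro τ hτ; rw [uIcc_of_le ht0] at hτ; exact hglin τ (by linarith [hτ.2]))]
      rw [intervalIntegral.integral_const_mul, integral_id]
      ring_nf
    rw [It]
    have h1 : f 0 / δ * (t ^ 2 / 2) ≤ 0 := by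
      apply mul_nonpos_of_nonpos_of_nonneg
      · exact le_of_lt (div_neg_of_neg_of_pos hf0 hδ0)
      · positivity
    nlinarith
end
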